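/- arXiv:2601.01197 — 4 statements merged into one kernel-verified Lean document; each statement's English description precedes it below -/
import Mathlib

section
/- Let n ≥ 1, α > 0, 1 ≤ p < ∞ and δ > 0, and let f be a measurable function on ℂⁿ such that f·k_z ∈ L^p_α for every z ∈ ℂⁿ. Then there is a constant C > 0 (depending only on n, p, α, δ) such that for every z ∈ ℂⁿ, G_{p,2δ}(f)(z)^p ≤ C·∫_{B(z,2δ)} |H_f(k_z)(w)|^p e^{−αp|w|²/2} dv(w), where H_f(k_z) = f·k_z − P(f·k_z). -/
open MeasureTheory Metric ENNReal
open scoped ENNReal NNReal ComplexConjugate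

noncomputable section

/-- `ℂⁿ` with the Euclidean metric and Lebesgue measure. -/
abbrev Cn (n : ℕ) := EuclideanSpace ℂ (Fin n)

instance (n : ℕ) : MeasurableSpace (Cn n) := borel _
instance (n : ℕ) : BorelSpace (Cn n) := ⟨rfl⟩

/-- Lebesgue measure on `ℂⁿ ≅ ℝ^{2n}`, normalized by an orthonormal real basis. -/
instance (n : ℕ) : MeasureSpace (Cn n) := ⟨(stdOrthonormalBasis ℝ (Cn n)).toBasis.addHaar⟩

/-- The Hermitian pairing `⟨w,z⟩ = ∑ᵢ wᵢ · conj zᵢ`. -/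
def herm {n : ℕ} (w z : Cn n) : ℂ := ∑ i, w i * conj (z i)

/-- The normalized reproducing kernel `k_z(w) = e^{α⟨w,z⟩ − α|z|²/2}` of `F²_α`. -/
def fockKernel (n : ℕ) (α : ℝ) (z w : Cn n) : ℂ :=
  Complex.exp ((α : ℂ) * herm w z - ((α / 2 * ‖z‖ ^ 2 : ℝ) : ℂ))

/-- The weighted measure `e^{−αp|z|²/2} dv(z)`, so that `L^p_α = L^p` of this measure. -/
def wMeasure (n : ℕ) (p α : ℝ) : Measure (Cn n) :=
  (volume : Measure (Cn n)).withDensity fun z =>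
    ENNReal.ofReal (Real.exp (-(α * p / 2) * ‖z‖ ^ 2))

/-- The `L^p_α`-norm `(∫ |f|^p e^{−αp|z|²/2} dv)^{1/p}`, valued in `ℝ≥0∞`. -/
def eNormLpα (n : ℕ) (p α : ℝ) (f : Cn n → ℂ) : ℝ≥0∞ :=
  (∫⁻ z, ENNReal.ofReal (‖f z‖ ^ p * Real.exp (-(α * p / 2) * ‖z‖ ^ 2))) ^ (1 / p)

/-- The Bergman projection `P f(z) = ∫ e^{α⟨z,w⟩} f(w) e^{−α|w|²} dv(w)`. -/
def bergmanProj (n : ℕ) (α : ℝ) (f : Cn n → ℂ) (z : Cn n) : ℂ :=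
  ∫ w, Complex.exp ((α : ℂ) * herm z w) * f w * ((Real.exp (-α * ‖w‖ ^ 2) : ℝ) : ℂ)

/-- The Hankel operator `H_f g = f g − P(fg)`, as a function. -/
def hankel (n : ℕ) (α : ℝ) (f g : Cn n → ℂ) : Cn n → ℂ :=
  fun z => f z * g z - bergmanProj n α (fun w => f w * g w) z

/-- The symbol class `𝒮`: `f·k_z ∈ ⋃_{q ≥ 1} L^q_α` for every `z`. -/
def symbolClass (n : ℕ) (α : ℝ) (f : Cn n → ℂ) : Prop :=
  ∀ z : Cn n, ∃ q : ℝ, 1 ≤ q ∧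
    MemLp (fun w => f w * fockKernel n α z w) (ENNReal.ofReal q) (wMeasure n q α)

/-- `G_{p,ρ}(f)(z)`: the distance of `f` to holomorphic functions in the normalized
`L^p`-metric of the ball `B(z,ρ)`. -/
def Gfun (n : ℕ) (p ρ : ℝ) (f : Cn n → ℂ) (z : Cn n) : ℝ :=
  ⨅ h : {h : Cn n → ℂ // DifferentiableOn ℂ h (ball z ρ)},
    (((∫⁻ w in ball z ρ, ENNReal.ofReal (‖f w - h.1 w‖ ^ p)) /
        volume (ball z ρ)).toReal) ^ (1 / p)

/-- Membership in `IDA^{s,p}`. -/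
def memIDA (n : ℕ) (s p : ℝ) (f : Cn n → ℂ) : Prop :=
  LocallyIntegrable (fun z => ‖f z‖ ^ p) (volume : Measure (Cn n)) ∧
    (∫⁻ z, ENNReal.ofReal (Gfun n p 1 f z ^ s)) < ∞

/-- The `IDA^{s,p}`-norm `(∫ G_p(f)^s dv)^{1/s}`. -/
def idaNorm (n : ℕ) (s p : ℝ) (f : Cn n → ℂ) : ℝ :=
  ((∫⁻ z, ENNReal.ofReal (Gfun n p 1 f z ^ s)).toReal) ^ (1 / s)

/-- The exponent `κ = κ(p,r)` of the main theorem. -/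
def kappaPR (p r : ℝ) : ℝ :=
  if p ≤ 2 then 2
  else if r ≤ p / (p - 1) then p / (p - 1)
  else if r ≤ p then r
  else p

/-- `T : X → Y` is `(q,r)`-summing with constant `C`:
`(∑ₖ ‖T xₖ‖^q)^{1/q} ≤ C · sup_{‖x*‖ ≤ 1} (∑ₖ |x*(xₖ)|^r)^{1/r}`
for all finite sequences. -/
def IsSummingWith {X Y : Type*} [NormedAddCommGroup X] [NormedSpace ℂ X]
    [NormedAddCommGroup Y] (q r : ℝ) (T : X → Y) (C : ℝ) : Prop :=
  ∀ (m : ℕ) (x : Fin m → X) (D : ℝ),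
    (∀ φ : X →L[ℂ] ℂ, ‖φ‖ ≤ 1 → (∑ k, ‖φ (x k)‖ ^ r) ^ (1 / r) ≤ D) →
    (∑ k, ‖T (x k)‖ ^ q) ^ (1 / q) ≤ C * D

instance factOneLeOfReal (p : ℝ) [hp : Fact ((1 : ℝ) ≤ p)] :
    Fact ((1 : ℝ≥0∞) ≤ ENNReal.ofReal p) :=
  ⟨by simpa using ENNReal.one_le_ofReal.mpr hp.out⟩

instance factOneLeOneReal : Fact ((1 : ℝ) ≤ (1 : ℝ)) := ⟨le_refl _⟩

/-- The Fock space `F^p_α` as a submodule of `L^p_α`: the a.e. classes having an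
entire representative. -/
def FockSubmodule (n : ℕ) (p α : ℝ) :
    Submodule ℂ (Lp ℂ (ENNReal.ofReal p) (wMeasure n p α)) where
  carrier := {f | ∃ g : Cn n → ℂ, Differentiable ℂ g ∧ (f : Cn n → ℂ) =ᵐ[wMeasure n p α] g}
  add_mem' := by
    rintro f₁ f₂ ⟨g₁, hg₁, he₁⟩ ⟨g₂, hg₂, he₂⟩
    exact ⟨g₁ + g₂, hg₁.add hg₂, (Lp.coeFn_add f₁ f₂).trans (he₁.add he₂)⟩
  zero_mem' := ⟨0, differentiable_const 0, Lp.coeFn_zero ℂ _ _⟩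
  smul_mem' := by
    rintro c f ⟨g, hg, he⟩
    exact ⟨c • g, hg.const_smul c, (Lp.coeFn_smul c f).trans (he.const_smul c)⟩

/-- The Fock space `F^p_α`, as a normed space. -/
abbrev FockSpace (n : ℕ) (p α : ℝ) := ↥(FockSubmodule n p α)

/-- A continuous linear operator `T : F^p_α → L^p_α` extends the Hankel operator `H_f`
(which is densely defined on the span of the normalized reproducing kernels). -/
def ExtendsHankel (n : ℕ) (p α : ℝ) [Fact ((1 : ℝ) ≤ p)] (f : Cn n → ℂ)
    (T : FockSpace n p α →L[ℂ] Lp ℂ (ENNReal.ofReal p) (wMeasure n p α)) : Prop :=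
  ∀ (z : Cn n) (g : FockSpace n p α),
    ((g : Lp ℂ (ENNReal.ofReal p) (wMeasure n p α)) : Cn n → ℂ)
        =ᵐ[wMeasure n p α] fockKernel n α z →
    ((T g : Lp ℂ (ENNReal.ofReal p) (wMeasure n p α)) : Cn n → ℂ)
        =ᵐ[wMeasure n p α] hankel n α f (fockKernel n α z)

/-- The measure defining `L^p_α(dμ)`, namely `e^{−αp|z|²/2} dμ(z)`. -/
def wMeasureμ (n : ℕ) (p α : ℝ) (μ : Measure (Cn n)) : Measure (Cn n) :=
  μ.withDensity fun z => ENNReal.ofReal (Real.exp (-(α * p / 2) * ‖z‖ ^ 2))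

/-- A continuous linear operator `T : F^p_α → L^p_α(dμ)` is the identity embedding:
it sends each element of the Fock space to (the `L^p(dμ)`-class of) its entire
representative. -/
def IsEmbeddingInto (n : ℕ) (p α : ℝ) [Fact ((1 : ℝ) ≤ p)] (μ : Measure (Cn n))
    (T : FockSpace n p α →L[ℂ] Lp ℂ (ENNReal.ofReal p) (wMeasureμ n p α μ)) : Prop :=
  ∀ (g : FockSpace n p α) (G : Cn n → ℂ), Differentiable ℂ G →
    ((g : Lp ℂ (ENNReal.ofReal p) (wMeasure n p α)) : Cn n → ℂ) =ᵐ[wMeasure n p α] G →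
    ((T g : Lp ℂ (ENNReal.ofReal p) (wMeasureμ n p α μ)) : Cn n → ℂ) =ᵐ[wMeasureμ n p α μ] G

/-- `{z_j}` is a `δ`-lattice: the balls `B(z_j, δ)` cover `ℂⁿ` and the balls
`B(z_j, bδ)` are pairwise disjoint for some `b > 0`. -/
def IsLattice (n : ℕ) (δ : ℝ) (zs : ℕ → Cn n) : Prop :=
  (∀ w : Cn n, ∃ j, w ∈ ball (zs j) δ) ∧
    ∃ b : ℝ, 0 < b ∧ Pairwise fun i j => Disjoint (ball (zs i) (b * δ)) (ball (zs j) (b * δ))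

/-- Every point of `ℂⁿ` lies in at most `N` of the balls `B(z_j, ρ)`. -/
def CoverMult (n : ℕ) (ρ : ℝ) (zs : ℕ → Cn n) (N : ℕ) : Prop :=
  ∀ w : Cn n, Set.Finite {j | w ∈ ball (zs j) ρ} ∧ Set.ncard {j | w ∈ ball (zs j) ρ} ≤ N

/-- The averaged function `μ̂_δ(z) = μ(B(z,δ))/|B(z,δ)|`, valued in `ℝ≥0∞`. -/
def avgE (n : ℕ) (μ : Measure (Cn n)) (δ : ℝ) (z : Cn n) : ℝ≥0∞ :=
  μ (ball z δ) / volume (ball z δ)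

/-- The `t`-Berezin transform `μ̃_t(z) = ∫ |k_z(w)|^t e^{−αt|w|²/2} dμ(w)`, valued in `ℝ≥0∞`. -/
def berezinE (n : ℕ) (α t : ℝ) (μ : Measure (Cn n)) (z : Cn n) : ℝ≥0∞ :=
  ∫⁻ w, ENNReal.ofReal (‖fockKernel n α z w‖ ^ t * Real.exp (-(α * t / 2) * ‖w‖ ^ 2)) ∂μ

end
open MeasureTheory Metric ENNReal
open scoped ENNReal NNReal ComplexConjugate

section Aux
variable {n : ℕ}

lemma gauss_int (n : ℕ) (c : ℝ) (hc : 0 < c) :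
    Integrable (fun v : Cn n => Real.exp (-c * ‖v‖ ^ 2)) := by
  have h := GaussianFourier.integrable_cexp_neg_mul_sq_norm_add (V := Cn n) (b := (c : ℂ))
    (by simpa using hc) 0 0
  refine h.norm.congr (Filter.Eventually.of_forall fun v => ?_)
  simp [Complex.norm_exp]
  norm_cast
  exact Or.inl rfl

lemma herm_eq (a b : Cn n) : herm a b = (inner ℂ b a : ℂ) := by
  simp only [herm, PiLp.inner_apply, RCLike.inner_apply]

lemma fockKernel_ne_zero {α : ℝ} {z w : Cn n} : fockKernel n α z w ≠ 0 :=
  Complex.exp_ne_zero _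

lemma norm_fockKernel (α : ℝ) (z w : Cn n) :
    ‖fockKernel n α z w‖ = Real.exp (α / 2 * ‖w‖ ^ 2 - α / 2 * ‖w - z‖ ^ 2) := by
  rw [fockKernel, Complex.norm_exp]
  congr 1
  have h1 : (((α : ℂ) * herm w z - ((α / 2 * ‖z‖ ^ 2 : ℝ) : ℂ))).re
      = α * (herm w z).re - α / 2 * ‖z‖ ^ 2 := by
    simp [Complex.sub_re, Complex.mul_re, ← Complex.ofReal_pow]
  rw [h1, herm_eq w z]
  have h2 : ‖z - w‖ ^ 2 = ‖z‖ ^ 2 - 2 * Complex.re (inner ℂ z w : ℂ) + ‖w‖ ^ 2 := by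
    exact_mod_cast norm_sub_sq (𝕜 := ℂ) z w
  have h3 : ‖z - w‖ = ‖w - z‖ := norm_sub_rev z w
  rw [h3] at h2
  have : Complex.re (inner ℂ z w : ℂ) = (‖z‖ ^ 2 + ‖w‖ ^ 2 - ‖w - z‖ ^ 2) / 2 := by linarith
  rw [this]; ring

lemma gauss_dom (c a : ℝ) (hc : 0 < c) (r : ℝ) (hr : 0 ≤ r) :
    (1 + r) * Real.exp (a * r - 2 * c * r ^ 2) ≤
      Real.exp ((|a| + 1) ^ 2 / (4 * c)) * Real.exp (-c * r ^ 2) := by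
  have h1 : 1 + r ≤ Real.exp r := by
    have := Real.add_one_le_exp r; linarith
  have h2 : (1 + r) * Real.exp (a * r - 2 * c * r ^ 2) ≤
      Real.exp (r + (a * r - 2 * c * r ^ 2)) := by
    rw [Real.exp_add]
    exact mul_le_mul_of_nonneg_right h1 (Real.exp_pos _).le
  refine h2.trans ?_
  rw [← Real.exp_add, Real.exp_le_exp]
  have hb : (|a| + 1) * r ≤ c * r ^ 2 + (|a| + 1) ^ 2 / (4 * c) := by
    have hd : ((|a| + 1) ^ 2 / (4 * c)) * (4 * c) = (|a| + 1) ^ 2 := by field_simp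
    nlinarith [sq_nonneg (2 * c * r - (|a| + 1)), hc]
  have har : a * r ≤ |a| * r := mul_le_mul_of_nonneg_right (le_abs_self a) hr
  nlinarith
end Aux
section Aux2
open MeasureTheory Metric Complex
set_option maxHeartbeats 1000000
set_option synthInstance.maxHeartbeats 1000000
variable {n : ℕ}

lemma diff_param (α : ℝ) (G : Cn n → ℂ)
    (hGm : AEStronglyMeasurable G (volume : Measure (Cn n)))
    (hGi : ∀ R : ℝ, Integrable (fun w : Cn n => (1 + ‖w‖) * Real.exp (R * ‖w‖) * ‖G w‖)) :
    Differentiable ℂ fun ζ : Cn n => ∫ w : Cn n, Complex.exp ((α : ℂ) * herm ζ w) * G w := by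
  have hherm : ∀ ζ w : Cn n, herm ζ w = (innerSL ℂ w) ζ := fun ζ w => herm_eq ζ w
  intro ζ₀
  set R : ℝ := |α| * (‖ζ₀‖ + 1) with hRdef
  set bound : Cn n → ℝ := fun w => |α| * ‖w‖ * Real.exp (R * ‖w‖) * ‖G w‖ with hbdef
  set F' : Cn n → (Cn n →L[ℂ] ℂ) :=
    fun w => (G w * Complex.exp ((α : ℂ) * herm ζ₀ w)) • ((α : ℂ) • innerSL ℂ w) with hF'def
  have hcont : ∀ ζ : Cn n, Continuous fun w : Cn n => Complex.exp ((α : ℂ) * herm ζ w) := by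
    intro ζ
    have h1 : Continuous fun w : Cn n => (inner ℂ w ζ : ℂ) :=
      Continuous.inner continuous_id continuous_const
    have : Continuous fun w : Cn n => (α : ℂ) * herm ζ w := by
      simp only [herm_eq]
      exact continuous_const.mul h1
    exact Complex.continuous_exp.comp this
  have hderiv : ∀ (w : Cn n) (ζ : Cn n),
      HasFDerivAt (fun ζ' : Cn n => Complex.exp ((α : ℂ) * herm ζ' w) * G w)
        ((G w * Complex.exp ((α : ℂ) * herm ζ w)) • ((α : ℂ) • innerSL ℂ w)) ζ := by
    intro w ζ
    have h1 : HasFDerivAt (fun ζ' : Cn n => (α : ℂ) * herm ζ' w) ((α : ℂ) • innerSL ℂ w) ζ := by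
      simp only [hherm]
      exact (innerSL ℂ w).hasFDerivAt.const_mul _
    have h3 := (h1.cexp).mul_const (G w)
    refine h3.congr_fderiv ?_
    simp only [smul_smul, mul_assoc]
  have hDnorm : ∀ (w : Cn n) (ζ : Cn n), ‖ζ‖ ≤ ‖ζ₀‖ + 1 →
      ‖(G w * Complex.exp ((α : ℂ) * herm ζ w)) • ((α : ℂ) • innerSL ℂ w)‖ ≤ bound w := by
    intro w ζ hζ
    rw [norm_smul (α := ℂ) (β := Cn n →L[ℂ] ℂ), norm_smul (α := ℂ) (β := Cn n →L[ℂ] ℂ), norm_mul]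
    have h1 : ‖innerSL ℂ w‖ ≤ ‖w‖ := le_of_eq (innerSL_apply_norm (𝕜 := ℂ) w)
    have h2 : ‖Complex.exp ((α : ℂ) * herm ζ w)‖ ≤ Real.exp (R * ‖w‖) := by
      rw [Complex.norm_exp]
      apply Real.exp_le_exp.mpr
      have : ((α : ℂ) * herm ζ w).re = α * (herm ζ w).re := by
        simp [Complex.mul_re]
      rw [this]
      calc α * (herm ζ w).re ≤ |α * (herm ζ w).re| := le_abs_self _
        _ = |α| * |(herm ζ w).re| := abs_mul _ _
        _ ≤ |α| * ‖herm ζ w‖ := by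
            gcongr
            exact Complex.abs_re_le_norm _
        _ ≤ |α| * (‖w‖ * ‖ζ‖) := by
            gcongr
            rw [hherm]
            exact (innerSL ℂ w).le_opNorm ζ |>.trans (mul_le_mul_of_nonneg_right (le_of_eq (innerSL_apply_norm (𝕜 := ℂ) w)) (norm_nonneg ζ))
        _ ≤ |α| * (‖w‖ * (‖ζ₀‖ + 1)) := by gcongr
        _ = R * ‖w‖ := by rw [hRdef]; ring
    have hαn : ‖(α : ℂ)‖ = |α| := (Complex.norm_real α).trans (Real.norm_eq_abs α)
    rw [hαn]
    calc ‖G w‖ * ‖Complex.exp ((α : ℂ) * herm ζ w)‖ * (|α| * ‖innerSL ℂ w‖)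
        ≤ ‖G w‖ * Real.exp (R * ‖w‖) * (|α| * ‖w‖) := by gcongr
      _ = bound w := by rw [hbdef]; ring
  have hbound_int : Integrable bound := by
    refine (Integrable.mono' (((hGi R).const_mul |α|)) ?_ (Filter.Eventually.of_forall fun w => ?_))
    · exact ((((continuous_const.mul continuous_norm).mul
        (Real.continuous_exp.comp (continuous_const.mul continuous_norm))).aestronglyMeasurable).mul
        hGm.norm)
    · rw [hbdef]
      simp only [Real.norm_eq_abs]
      rw [_root_.abs_of_nonneg (by positivity)]
      have h1 : (1:ℝ) ≤ 1 + ‖w‖ := by simp [norm_nonneg]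
      calc |α| * ‖w‖ * Real.exp (R * ‖w‖) * ‖G w‖
          ≤ |α| * (1 + ‖w‖) * Real.exp (R * ‖w‖) * ‖G w‖ := by
            have hw1 : ‖w‖ ≤ 1 + ‖w‖ := by linarith [norm_nonneg w]
            gcongr
        _ = |α| * ((1 + ‖w‖) * Real.exp (R * ‖w‖) * ‖G w‖) := by ring
  have hF_int : Integrable fun w : Cn n => Complex.exp ((α : ℂ) * herm ζ₀ w) * G w := by
    refine Integrable.mono' (hGi R) (((hcont ζ₀).aestronglyMeasurable).mul hGm)
      (Filter.Eventually.of_forall fun w => ?_)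
    rw [norm_mul]
    have h2 : ‖Complex.exp ((α : ℂ) * herm ζ₀ w)‖ ≤ Real.exp (R * ‖w‖) := by
      rw [Complex.norm_exp]
      apply Real.exp_le_exp.mpr
      have : ((α : ℂ) * herm ζ₀ w).re = α * (herm ζ₀ w).re := by simp [Complex.mul_re]
      rw [this]
      calc α * (herm ζ₀ w).re ≤ |α| * |(herm ζ₀ w).re| := by
            rw [← abs_mul]; exact le_abs_self _
        _ ≤ |α| * ‖herm ζ₀ w‖ := by gcongr; exact Complex.abs_re_le_norm _
        _ ≤ |α| * (‖w‖ * ‖ζ₀‖) := by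
            gcongr
            rw [hherm]
            exact (innerSL ℂ w).le_opNorm ζ₀ |>.trans (mul_le_mul_of_nonneg_right (le_of_eq (innerSL_apply_norm (𝕜 := ℂ) w)) (norm_nonneg ζ₀))
        _ ≤ |α| * (‖w‖ * (‖ζ₀‖ + 1)) := by gcongr; linarith
        _ = R * ‖w‖ := by rw [hRdef]; ring
    calc ‖Complex.exp ((α : ℂ) * herm ζ₀ w)‖ * ‖G w‖ ≤ Real.exp (R * ‖w‖) * ‖G w‖ := by gcongr
      _ ≤ (1 + ‖w‖) * (Real.exp (R * ‖w‖) * ‖G w‖) := by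
          have h1 : (1:ℝ) ≤ 1 + ‖w‖ := by simp [norm_nonneg]
          exact le_mul_of_one_le_left (by positivity) h1
      _ = (1 + ‖w‖) * Real.exp (R * ‖w‖) * ‖G w‖ := by ring
  have hF'_meas : AEStronglyMeasurable F' (volume : Measure (Cn n)) := by
    refine AEStronglyMeasurable.smul (hGm.mul ((hcont ζ₀).aestronglyMeasurable)) ?_
    exact (((innerSL ℂ (E := Cn n)).continuous).const_smul ((α : ℂ))).aestronglyMeasurable
  have h_lip : ∀ᵐ w : Cn n ∂(volume : Measure (Cn n)),
      LipschitzOnWith (Real.nnabs (bound w))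
        (fun ζ => Complex.exp ((α : ℂ) * herm ζ w) * G w) (ball ζ₀ 1) := by
    refine Filter.Eventually.of_forall fun w => ?_
    refine (convex_ball ζ₀ 1).lipschitzOnWith_of_nnnorm_hasFDerivWithin_le
      (f' := fun ζ => ((G w * Complex.exp ((α : ℂ) * herm ζ w)) •
        ((α : ℂ) • innerSL ℂ w)).restrictScalars ℝ)
      (fun ζ _ => ((hderiv w ζ).restrictScalars ℝ).hasFDerivWithinAt) ?_
    intro ζ hζ
    have hζn : ‖ζ‖ ≤ ‖ζ₀‖ + 1 := by
      have : ‖ζ - ζ₀‖ < 1 := by rwa [mem_ball_iff_norm] at hζ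
      have he : ζ₀ + (ζ - ζ₀) = ζ := by abel
      calc ‖ζ‖ = ‖ζ₀ + (ζ - ζ₀)‖ := by rw [he]
        _ ≤ ‖ζ₀‖ + ‖ζ - ζ₀‖ := norm_add_le _ _
        _ ≤ ‖ζ₀‖ + 1 := by linarith
    rw [← NNReal.coe_le_coe, coe_nnnorm, Real.coe_nnabs]
    calc ‖((G w * Complex.exp ((α : ℂ) * herm ζ w)) • ((α : ℂ) • innerSL ℂ w)).restrictScalars ℝ‖
        = ‖(G w * Complex.exp ((α : ℂ) * herm ζ w)) • ((α : ℂ) • innerSL ℂ w)‖ := rfl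
      _ ≤ bound w := hDnorm w ζ hζn
      _ ≤ |bound w| := le_abs_self _
  have key := hasFDerivAt_integral_of_dominated_loc_of_lip (μ := (volume : Measure (Cn n)))
      (F := fun ζ w => Complex.exp ((α : ℂ) * herm ζ w) * G w) (F' := F') (x₀ := ζ₀)
      (bound := bound) (s := ball ζ₀ 1) (ball_mem_nhds ζ₀ one_pos)
      (Filter.Eventually.of_forall fun ζ => ((hcont ζ).aestronglyMeasurable).mul hGm)
      hF_int hF'_meas h_lip hbound_int
      (Filter.Eventually.of_forall fun w => hderiv w ζ₀)
  exact key.2.differentiableAt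

end Aux2
section Aux3
open MeasureTheory Metric
variable {n : ℕ}

lemma wdensity_measurable (α p : ℝ) :
    Measurable fun z : Cn n => ENNReal.ofReal (Real.exp (-(α * p / 2) * ‖z‖ ^ 2)) :=
  (Real.continuous_exp.comp
    ((continuous_const).mul ((continuous_norm).pow 2))).measurable.ennreal_ofReal

lemma vol_ac_wMeasure (n : ℕ) (p α : ℝ) : (volume : Measure (Cn n)) ≪ wMeasure n p α := by
  rw [wMeasure]
  exact withDensity_absolutelyContinuous' (wdensity_measurable α p).aemeasurable
    (Filter.Eventually.of_forall fun w => (ENNReal.ofReal_pos.mpr (Real.exp_pos _)).ne')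

lemma key_int (n : ℕ) (α p : ℝ) (hα : 0 < α) (hp : 1 ≤ p) (g : Cn n → ℂ)
    (hgm : AEStronglyMeasurable g (volume : Measure (Cn n)))
    (hg : MemLp g (ENNReal.ofReal p) (wMeasure n p α)) (R : ℝ) :
    Integrable (fun w : Cn n =>
      (1 + ‖w‖) * Real.exp (R * ‖w‖) * (‖g w‖ * Real.exp (-α * ‖w‖ ^ 2))) := by
  have hp0 : (0:ℝ) < p := lt_of_lt_of_le one_pos hp
  set φ : Cn n → ℝ := fun w => ‖g w‖ * Real.exp (-(α / 2) * ‖w‖ ^ 2) with hφdef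
  set m : Cn n → ℝ := fun w => (1 + ‖w‖) * Real.exp (R * ‖w‖ - α / 2 * ‖w‖ ^ 2) with hmdef
  have hφ0 : ∀ w, 0 ≤ φ w := fun w => by positivity
  have hm0 : ∀ w, 0 ≤ m w := fun w => by positivity
  have hcontm : Continuous m :=
    (continuous_const.add continuous_norm).mul (Real.continuous_exp.comp
      (((continuous_const).mul continuous_norm).sub
        ((continuous_const).mul (continuous_norm.pow 2))))
  have hmeasφ : AEMeasurable φ (volume : Measure (Cn n)) :=
    hgm.norm.aemeasurable.mul (Real.continuous_exp.comp
      ((continuous_const).mul (continuous_norm.pow 2))).measurable.aemeasurable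
  have heq : ∀ w : Cn n, (1 + ‖w‖) * Real.exp (R * ‖w‖) * (‖g w‖ * Real.exp (-α * ‖w‖ ^ 2))
      = φ w * m w := by
    intro w
    have e1 : Real.exp (R * ‖w‖) * Real.exp (-α * ‖w‖ ^ 2)
        = Real.exp (-(α / 2) * ‖w‖ ^ 2) * Real.exp (R * ‖w‖ - α / 2 * ‖w‖ ^ 2) := by
      rw [← Real.exp_add, ← Real.exp_add]; congr 1; ring
    calc (1 + ‖w‖) * Real.exp (R * ‖w‖) * (‖g w‖ * Real.exp (-α * ‖w‖ ^ 2))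
        = ((1 + ‖w‖) * ‖g w‖) * (Real.exp (R * ‖w‖) * Real.exp (-α * ‖w‖ ^ 2)) := by ring
      _ = ((1 + ‖w‖) * ‖g w‖) *
            (Real.exp (-(α / 2) * ‖w‖ ^ 2) * Real.exp (R * ‖w‖ - α / 2 * ‖w‖ ^ 2)) := by rw [e1]
      _ = φ w * m w := by rw [hφdef, hmdef]; ring
  have hA : (∫⁻ w, (ENNReal.ofReal (φ w)) ^ p) < ⊤ := by
    have h1 := hg.2
    rw [eLpNorm_eq_lintegral_rpow_enorm_toReal (by simpa using hp0) ENNReal.ofReal_ne_top,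
      ENNReal.toReal_ofReal hp0.le] at h1
    have h2 : (∫⁻ w, (‖g w‖₊ : ℝ≥0∞) ^ p ∂(wMeasure n p α)) < ⊤ :=
      (ENNReal.rpow_lt_top_iff_of_pos (by positivity)).mp h1
    have hgae : AEMeasurable (fun w => (‖g w‖₊ : ℝ≥0∞) ^ p) (wMeasure n p α) :=
      hg.1.enorm.pow aemeasurable_const
    rw [wMeasure, lintegral_withDensity_eq_lintegral_mul₀'
      (wdensity_measurable α p).aemeasurable hgae] at h2
    refine lt_of_eq_of_lt ?_ h2
    refine lintegral_congr fun w => ?_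
    have e2 : ENNReal.ofReal (φ w)
        = (‖g w‖₊ : ℝ≥0∞) * ENNReal.ofReal (Real.exp (-(α / 2) * ‖w‖ ^ 2)) := by
      rw [hφdef, ENNReal.ofReal_mul (norm_nonneg _), ofReal_norm, enorm_eq_nnnorm]
    have e3 : (ENNReal.ofReal (Real.exp (-(α / 2) * ‖w‖ ^ 2))) ^ p
        = ENNReal.ofReal (Real.exp (-(α * p / 2) * ‖w‖ ^ 2)) := by
      rw [ENNReal.ofReal_rpow_of_nonneg (Real.exp_pos _).le hp0.le, ← Real.exp_mul]
      congr 1; ring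
    rw [e2, ENNReal.mul_rpow_of_nonneg _ _ hp0.le, e3]
    simp [mul_comm]
  refine ⟨(((continuous_const.add continuous_norm).mul
      (Real.continuous_exp.comp ((continuous_const).mul continuous_norm))).aestronglyMeasurable).mul
      (hgm.norm.mul (Real.continuous_exp.comp
        ((continuous_const).mul (continuous_norm.pow 2))).aestronglyMeasurable), ?_⟩
  rw [hasFiniteIntegral_iff_ofReal (Filter.Eventually.of_forall fun w => by positivity)]
  have hrw : (∫⁻ w, ENNReal.ofReal
        ((1 + ‖w‖) * Real.exp (R * ‖w‖) * (‖g w‖ * Real.exp (-α * ‖w‖ ^ 2))))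
      = ∫⁻ w, ENNReal.ofReal (φ w) * ENNReal.ofReal (m w) := by
    refine lintegral_congr fun w => ?_
    rw [heq w, ENNReal.ofReal_mul (hφ0 w)]
  rw [hrw]
  have hKb := fun (w : Cn n) => gauss_dom (α / 4) R (by positivity) ‖w‖ (norm_nonneg w)
  set K : ℝ := Real.exp ((|R| + 1) ^ 2 / (4 * (α / 4))) with hKdef
  have hK0 : 0 < K := Real.exp_pos _
  have hm1 : ∀ w : Cn n, m w ≤ K * Real.exp (-(α / 4) * ‖w‖ ^ 2) := by
    intro w
    have h2 : R * ‖w‖ - α / 2 * ‖w‖ ^ 2 = R * ‖w‖ - 2 * (α / 4) * ‖w‖ ^ 2 := by ring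
    rw [hmdef]; simp only []
    rw [h2]
    exact hKb w
  rcases eq_or_lt_of_le hp with hp1 | hp1
  · -- p = 1
    subst hp1
    simp only [ENNReal.rpow_one] at hA
    have hmK : ∀ w : Cn n, m w ≤ K := by
      intro w
      refine (hm1 w).trans ?_
      calc K * Real.exp (-(α / 4) * ‖w‖ ^ 2) ≤ K * 1 := by
            refine mul_le_mul_of_nonneg_left ?_ hK0.le
            rw [Real.exp_le_one_iff]
            nlinarith [sq_nonneg ‖w‖]
        _ = K := mul_one K
    calc (∫⁻ w, ENNReal.ofReal (φ w) * ENNReal.ofReal (m w))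
        ≤ ∫⁻ w, ENNReal.ofReal (φ w) * ENNReal.ofReal K :=
          lintegral_mono fun w => mul_le_mul_right (ENNReal.ofReal_le_ofReal (hmK w)) _
      _ = (∫⁻ w, ENNReal.ofReal (φ w)) * ENNReal.ofReal K :=
          lintegral_mul_const' _ _ ENNReal.ofReal_ne_top
      _ < ⊤ := ENNReal.mul_lt_top hA ENNReal.ofReal_lt_top
  · -- 1 < p
    set q : ℝ := Real.conjExponent p with hqdef
    have hpq : p.HolderConjugate q := Real.HolderConjugate.conjExponent hp1
    have hq0 : (0:ℝ) < q := hpq.symm.pos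
    have hB : (∫⁻ w, (ENNReal.ofReal (m w)) ^ q) < ⊤ := by
      have hmq : ∀ w : Cn n, (m w) ^ q ≤ K ^ q * Real.exp (-(q * (α / 4)) * ‖w‖ ^ 2) := by
        intro w
        calc (m w) ^ q ≤ (K * Real.exp (-(α / 4) * ‖w‖ ^ 2)) ^ q :=
              Real.rpow_le_rpow (hm0 w) (hm1 w) hq0.le
          _ = K ^ q * (Real.exp (-(α / 4) * ‖w‖ ^ 2)) ^ q :=
              Real.mul_rpow hK0.le (Real.exp_pos _).le
          _ = K ^ q * Real.exp (-(q * (α / 4)) * ‖w‖ ^ 2) := by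
              congr 1
              rw [← Real.exp_mul]
              congr 1; ring
      calc (∫⁻ w, (ENNReal.ofReal (m w)) ^ q) = ∫⁻ w, ENNReal.ofReal ((m w) ^ q) :=
            lintegral_congr fun w => by
              rw [ENNReal.ofReal_rpow_of_nonneg (hm0 w) hq0.le]
        _ ≤ ∫⁻ w, ENNReal.ofReal (K ^ q * Real.exp (-(q * (α / 4)) * ‖w‖ ^ 2)) :=
            lintegral_mono fun w => ENNReal.ofReal_le_ofReal (hmq w)
        _ = ∫⁻ w, ENNReal.ofReal (K ^ q) * ENNReal.ofReal (Real.exp (-(q * (α / 4)) * ‖w‖ ^ 2)) :=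
            lintegral_congr fun w => ENNReal.ofReal_mul (by positivity)
        _ = ENNReal.ofReal (K ^ q) * ∫⁻ w, ENNReal.ofReal (Real.exp (-(q * (α / 4)) * ‖w‖ ^ 2)) :=
            lintegral_const_mul' _ _ ENNReal.ofReal_ne_top
        _ < ⊤ := ENNReal.mul_lt_top ENNReal.ofReal_lt_top
            (gauss_int n (q * (α / 4)) (by positivity)).lintegral_lt_top
    have hH := ENNReal.lintegral_mul_le_Lp_mul_Lq (volume : Measure (Cn n)) hpq
      hmeasφ.ennreal_ofReal hcontm.measurable.ennreal_ofReal.aemeasurable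
    refine lt_of_le_of_lt ?_ (ENNReal.mul_lt_top
      (ENNReal.rpow_lt_top_of_nonneg (y := 1 / p) (by positivity) hA.ne)
      (ENNReal.rpow_lt_top_of_nonneg (y := 1 / q) (by positivity) hB.ne))
    simpa using hH
end Aux3
section Aux4
open MeasureTheory Metric
set_option maxHeartbeats 2000000
set_option synthInstance.maxHeartbeats 1000000
variable {n : ℕ}

lemma bergman_diff (α p : ℝ) (hα : 0 < α) (hp : 1 ≤ p) (g : Cn n → ℂ)
    (hgm : AEStronglyMeasurable g (volume : Measure (Cn n)))
    (hg : MemLp g (ENNReal.ofReal p) (wMeasure n p α)) :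
    Differentiable ℂ (bergmanProj n α g) := by
  have hG : ∀ ζ : Cn n, (fun w : Cn n => Complex.exp ((α : ℂ) * herm ζ w) * g w *
      ((Real.exp (-α * ‖w‖ ^ 2) : ℝ) : ℂ))
      = fun w : Cn n => Complex.exp ((α : ℂ) * herm ζ w) *
        (g w * ((Real.exp (-α * ‖w‖ ^ 2) : ℝ) : ℂ)) := fun ζ => funext fun w => mul_assoc _ _ _
  have hmain := diff_param α (fun w : Cn n => g w * ((Real.exp (-α * ‖w‖ ^ 2) : ℝ) : ℂ))
    (hgm.mul ((Complex.continuous_ofReal.comp (Real.continuous_exp.comp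
      ((continuous_const).mul (continuous_norm.pow 2)))).aestronglyMeasurable)) ?_
  · unfold bergmanProj
    convert hmain using 2 with ζ
    rw [hG ζ]
  · intro R
    refine (key_int n α p hα hp g hgm hg R).congr (Filter.Eventually.of_forall fun w => ?_)
    simp only [norm_mul, Complex.norm_real, Real.norm_eq_abs,
      _root_.abs_of_nonneg (Real.exp_pos (-α * ‖w‖ ^ 2)).le]

lemma main_pointwise (α p δ : ℝ) (hα : 0 < α) (hp : 1 ≤ p) (hδ : 0 < δ)
    (f : Cn n → ℂ) (z : Cn n)
    (B : Cn n → ℂ) (hB : B = bergmanProj n α (fun w => f w * fockKernel n α z w))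
    (w : Cn n) (hw : w ∈ ball z (2 * δ)) :
    ‖f w - B w * Complex.exp (((α / 2 * ‖z‖ ^ 2 : ℝ) : ℂ) - (α : ℂ) * herm w z)‖ ^ p
      ≤ Real.exp (2 * α * p * δ ^ 2) *
        (‖hankel n α f (fockKernel n α z) w‖ ^ p * Real.exp (-(α * p / 2) * ‖w‖ ^ 2)) := by
  have hp0 : (0:ℝ) < p := lt_of_lt_of_le one_pos hp
  have hk0 : fockKernel n α z w ≠ 0 := fockKernel_ne_zero
  have hkinv : Complex.exp (((α / 2 * ‖z‖ ^ 2 : ℝ) : ℂ) - (α : ℂ) * herm w z)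
      = (fockKernel n α z w)⁻¹ := by
    rw [fockKernel, ← Complex.exp_neg]
    congr 1; ring
  have hH : hankel n α f (fockKernel n α z) w
      = f w * fockKernel n α z w - B w := by rw [hankel, hB]
  have hdiff : f w - B w * Complex.exp (((α / 2 * ‖z‖ ^ 2 : ℝ) : ℂ) - (α : ℂ) * herm w z)
      = hankel n α f (fockKernel n α z) w * (fockKernel n α z w)⁻¹ := by
    rw [hkinv, hH]
    field_simp
  rw [hdiff, norm_mul, norm_inv]
  have hknorm : ‖fockKernel n α z w‖ = Real.exp (α / 2 * ‖w‖ ^ 2 - α / 2 * ‖w - z‖ ^ 2) :=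
    norm_fockKernel α z w
  have hfrac : ‖fockKernel n α z w‖⁻¹ = Real.exp (α / 2 * ‖w - z‖ ^ 2 - α / 2 * ‖w‖ ^ 2) := by
    rw [hknorm, ← Real.exp_neg]
    congr 1; ring
  rw [Real.mul_rpow (norm_nonneg _) (by rw [hfrac]; exact (Real.exp_pos _).le)]
  rw [hfrac, ← Real.exp_mul]
  have hwz : ‖w - z‖ ^ 2 ≤ (2 * δ) ^ 2 := by
    have h1 : ‖w - z‖ < 2 * δ := by rwa [mem_ball_iff_norm] at hw
    exact pow_le_pow_left₀ (norm_nonneg _) h1.le 2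
  have hexp : Real.exp ((α / 2 * ‖w - z‖ ^ 2 - α / 2 * ‖w‖ ^ 2) * p)
      ≤ Real.exp (2 * α * p * δ ^ 2) * Real.exp (-(α * p / 2) * ‖w‖ ^ 2) := by
    rw [← Real.exp_add, Real.exp_le_exp]
    have h2 : α / 2 * ‖w - z‖ ^ 2 * p ≤ α / 2 * ((2 * δ) ^ 2) * p := by
      have := mul_le_mul_of_nonneg_left hwz (by positivity : (0:ℝ) ≤ α / 2)
      exact mul_le_mul_of_nonneg_right this hp0.le
    nlinarith
  calc ‖hankel n α f (fockKernel n α z) w‖ ^ p *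
        Real.exp ((α / 2 * ‖w - z‖ ^ 2 - α / 2 * ‖w‖ ^ 2) * p)
      ≤ ‖hankel n α f (fockKernel n α z) w‖ ^ p *
        (Real.exp (2 * α * p * δ ^ 2) * Real.exp (-(α * p / 2) * ‖w‖ ^ 2)) := by
        exact mul_le_mul_of_nonneg_left hexp (Real.rpow_nonneg (norm_nonneg _) p)
    _ = Real.exp (2 * α * p * δ ^ 2) *
        (‖hankel n α f (fockKernel n α z) w‖ ^ p * Real.exp (-(α * p / 2) * ‖w‖ ^ 2)) := by ring
end Aux4
set_option maxHeartbeats 2000000 in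
set_option synthInstance.maxHeartbeats 1000000 in
/-- **Pointwise estimate in Theorems 3.2/3.3.** For `1 ≤ p < ∞` and `δ > 0` there is
`C > 0` such that for every symbol `f` with `f·k_z ∈ L^p_α` for all `z`, and every
`z ∈ ℂⁿ`, `G_{p,2δ}(f)(z)^p ≤ C ∫_{B(z,2δ)} |H_f(k_z)(w)|^p e^{−αp|w|²/2} dv(w)`. -/
theorem G_le_hankel_kernel (n : ℕ) (hn : 1 ≤ n) (α p δ : ℝ) (hα : 0 < α) (hp : 1 ≤ p)
    (hδ : 0 < δ) :
    ∃ C : ℝ, 0 < C ∧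
      ∀ f : Cn n → ℂ,
        (∀ z : Cn n, MemLp (fun w => f w * fockKernel n α z w) (ENNReal.ofReal p)
          (wMeasure n p α)) →
        ∀ z : Cn n,
          ENNReal.ofReal (Gfun n p (2 * δ) f z ^ p) ≤
            ENNReal.ofReal C *
              ∫⁻ w in ball z (2 * δ),
                ENNReal.ofReal (‖hankel n α f (fockKernel n α z) w‖ ^ p *
                  Real.exp (-(α * p / 2) * ‖w‖ ^ 2)) := by
  have hp0 : (0:ℝ) < p := lt_of_lt_of_le one_pos hp
  have h2δ : (0:ℝ) < 2 * δ := by linarith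
  set V₀ : ℝ≥0∞ := volume (ball (0 : Cn n) (2 * δ)) with hV₀
  have hV₀pos : 0 < V₀ := measure_ball_pos _ _ h2δ
  have hV₀top : V₀ ≠ ⊤ := measure_ball_lt_top.ne
  set E : ℝ := Real.exp (2 * α * p * δ ^ 2) with hE
  refine ⟨E / V₀.toReal,
    div_pos (Real.exp_pos _) (ENNReal.toReal_pos hV₀pos.ne' hV₀top), ?_⟩
  intro f hf z
  have hgm : AEStronglyMeasurable (fun w => f w * fockKernel n α z w)
      (volume : Measure (Cn n)) := ((hf z).1).mono_ac (vol_ac_wMeasure n p α)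
  set B : Cn n → ℂ := bergmanProj n α (fun w => f w * fockKernel n α z w) with hBdef
  have hBdiff : Differentiable ℂ B :=
    bergman_diff α p hα hp _ hgm (hf z)
  set h : Cn n → ℂ :=
    fun w => B w * Complex.exp (((α / 2 * ‖z‖ ^ 2 : ℝ) : ℂ) - (α : ℂ) * herm w z) with hh
  have hhdiff : DifferentiableOn ℂ h (ball z (2 * δ)) := by
    apply Differentiable.differentiableOn
    refine hBdiff.mul (Differentiable.cexp ((differentiable_const _).sub ?_))
    have he : (fun w : Cn n => (α : ℂ) * herm w z) = fun w => (α : ℂ) * (innerSL ℂ z w) := by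
      funext w; rw [herm_eq w z]; rfl
    rw [he]
    exact ((innerSL ℂ z).differentiable).const_mul _
  set H : Cn n → ℂ := hankel n α f (fockKernel n α z) with hHdef
  set J : ℝ≥0∞ := ∫⁻ w in ball z (2 * δ),
    ENNReal.ofReal (‖H w‖ ^ p * Real.exp (-(α * p / 2) * ‖w‖ ^ 2)) with hJ
  set I : ℝ≥0∞ := ∫⁻ w in ball z (2 * δ), ENNReal.ofReal (‖f w - h w‖ ^ p) with hI
  set V : ℝ≥0∞ := volume (ball z (2 * δ)) with hV
  have hVV₀ : V = V₀ := by
    rw [hV, hV₀]; exact Measure.addHaar_ball_center volume z (2 * δ)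
  have hstep1 : Gfun n p (2 * δ) f z ≤ ((I / V).toReal) ^ (1 / p) := by
    rw [Gfun]
    have hbdd : BddBelow (Set.range fun h' :
        {h' : Cn n → ℂ // DifferentiableOn ℂ h' (ball z (2 * δ))} =>
        (((∫⁻ w in ball z (2 * δ), ENNReal.ofReal (‖f w - h'.1 w‖ ^ p)) /
          volume (ball z (2 * δ))).toReal) ^ (1 / p)) := by
      refine ⟨0, ?_⟩
      rintro x ⟨h', rfl⟩
      exact Real.rpow_nonneg ENNReal.toReal_nonneg _
    exact ciInf_le hbdd ⟨h, hhdiff⟩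
  have hG0 : 0 ≤ Gfun n p (2 * δ) f z := by
    rw [Gfun]
    exact Real.iInf_nonneg fun h' => Real.rpow_nonneg ENNReal.toReal_nonneg _
  have hstep2 : Gfun n p (2 * δ) f z ^ p ≤ (I / V).toReal := by
    calc Gfun n p (2 * δ) f z ^ p ≤ (((I / V).toReal) ^ (1 / p)) ^ p :=
        Real.rpow_le_rpow hG0 hstep1 hp0.le
      _ = (I / V).toReal := by
        rw [← Real.rpow_mul ENNReal.toReal_nonneg, one_div, inv_mul_cancel₀ hp0.ne',
          Real.rpow_one]
  have hpt : ∀ w ∈ ball z (2 * δ), ENNReal.ofReal (‖f w - h w‖ ^ p) ≤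
      ENNReal.ofReal (E * (‖H w‖ ^ p * Real.exp (-(α * p / 2) * ‖w‖ ^ 2))) := by
    intro w hw
    exact ENNReal.ofReal_le_ofReal (main_pointwise α p δ hα hp hδ f z B hBdef w hw)
  have h4 : I ≤ ENNReal.ofReal E * J := by
    rw [hI]
    calc (∫⁻ w in ball z (2 * δ), ENNReal.ofReal (‖f w - h w‖ ^ p))
        ≤ ∫⁻ w in ball z (2 * δ),
            ENNReal.ofReal (E * (‖H w‖ ^ p * Real.exp (-(α * p / 2) * ‖w‖ ^ 2))) :=
          setLIntegral_mono' measurableSet_ball hpt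
      _ = ∫⁻ w in ball z (2 * δ), ENNReal.ofReal E *
            ENNReal.ofReal (‖H w‖ ^ p * Real.exp (-(α * p / 2) * ‖w‖ ^ 2)) :=
          lintegral_congr fun w => ENNReal.ofReal_mul (Real.exp_pos _).le
      _ = ENNReal.ofReal E * J := by
          rw [hJ]; exact lintegral_const_mul' _ _ ENNReal.ofReal_ne_top
  have h5 : ENNReal.ofReal (Gfun n p (2 * δ) f z ^ p) ≤ I / V :=
    le_trans (ENNReal.ofReal_le_ofReal hstep2) ENNReal.ofReal_toReal_le
  have h7 : ENNReal.ofReal E * J / V = ENNReal.ofReal (E / V₀.toReal) * J := by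
    rw [hVV₀, ENNReal.ofReal_div_of_pos (ENNReal.toReal_pos hV₀pos.ne' hV₀top),
      ENNReal.ofReal_toReal hV₀top, div_eq_mul_inv, div_eq_mul_inv]
    exact mul_right_comm _ _ _
  calc ENNReal.ofReal (Gfun n p (2 * δ) f z ^ p) ≤ I / V := h5
    _ ≤ ENNReal.ofReal E * J / V := ENNReal.div_le_div_right h4 V
    _ = ENNReal.ofReal (E / V₀.toReal) * J := h7
end

section
/- Let n ≥ 1, α > 0, 1 ≤ q < ∞ and δ > 0, and let {z_j}_{j=1}^∞ be a δ-lattice in ℂⁿ such that every point of ℂⁿ lies in at most N of the balls B(z_j, δ). Then there is a constant C > 0 (depending only on n, α, q, δ, N) such that for every entire function h ∈ F^q_α, ∑_{j=1}^∞ |h(z_j)|^q e^{−αq|z_j|²/2} ≤ C·‖h‖_{q,α}^q. -/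
open MeasureTheory Metric ENNReal
open scoped ENNReal NNReal ComplexConjugate

section AuxiliarySampling
open MeasureTheory Metric Real Set Complex ENNReal

noncomputable section

lemma circle_mean {g : ℂ → ℂ} (hg : Differentiable ℂ g) (c : ℂ) {R : ℝ} (hR : 0 < R) :
    (∫ θ in (0:ℝ)..(2*π), g (circleMap c R θ)) = (2*π : ℝ) • g c := by
  have h := (hg.differentiableOn : DifferentiableOn ℂ g (closedBall c R)).circleIntegral_sub_inv_smul
    (mem_ball_self hR)
  rw [circleIntegral] at h
  simp only [deriv_circleMap, circleMap_sub_center, smul_eq_mul] at h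
  have hee : ∀ θ : ℝ, circleMap 0 R θ * Complex.I * ((circleMap 0 R θ)⁻¹ * g (circleMap c R θ))
      = Complex.I * g (circleMap c R θ) := by
    intro θ
    have : circleMap 0 R θ ≠ 0 := by simp [circleMap, Complex.exp_ne_zero, hR.ne']
    field_simp
  rw [intervalIntegral.integral_congr (g := fun θ => Complex.I * g (circleMap c R θ))
    (fun θ _ => hee θ), intervalIntegral.integral_const_mul] at h
  have h2 : (2 * ↑π * Complex.I) * g c = Complex.I * ((2*π:ℝ) • g c) := by
    simp [Complex.real_smul]; ring
  rw [h2] at h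
  exact mul_left_cancel₀ Complex.I_ne_zero h

lemma circle_mean_norm_rpow {g : ℂ → ℂ} (hg : Differentiable ℂ g) {q : ℝ} (hq : 1 ≤ q)
    (c : ℂ) {R : ℝ} (hR : 0 < R) :
    2 * π * ‖g c‖ ^ q ≤ ∫ θ in Ioo (-π) π, ‖g (circleMap c R θ)‖ ^ q := by
  have pi_pos := Real.pi_pos
  have hq0 : (0:ℝ) < q := lt_of_lt_of_le one_pos hq
  set f : ℝ → ℝ := fun θ => ‖g (circleMap c R θ)‖ with hf_def
  have hfc : Continuous f := (hg.continuous.norm).comp (continuous_circleMap c R)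
  have hfq : Continuous (fun θ => f θ ^ q) := hfc.rpow_const fun x => Or.inr hq0.le
  set ν := volume.restrict (Ioc (0:ℝ) (2*π)) with hν
  set B := ∫ θ, f θ ^ q ∂ν with hB
  have Bnn : 0 ≤ B := integral_nonneg fun θ => Real.rpow_nonneg (norm_nonneg _) q
  -- step 1 : mean value bound for ‖g c‖
  have h1 : 2 * π * ‖g c‖ ≤ ∫ θ, f θ ∂ν := by
    have hcm := circle_mean hg c hR
    have hn : ‖(2*π : ℝ) • g c‖ = 2 * π * ‖g c‖ := by
      rw [norm_smul, Real.norm_eq_abs, abs_of_pos (by positivity)]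
    calc 2 * π * ‖g c‖ = ‖∫ θ in (0:ℝ)..(2*π), g (circleMap c R θ)‖ := by rw [hcm, hn]
    _ ≤ ∫ θ in (0:ℝ)..(2*π), f θ := by
        apply intervalIntegral.norm_integral_le_integral_norm
        positivity
    _ = ∫ θ, f θ ∂ν := by
        rw [intervalIntegral.integral_of_le (by positivity)]
  have hνuniv : ν univ = ENNReal.ofReal (2*π) := by
    rw [hν, Measure.restrict_apply_univ, Real.volume_Ioc]; norm_num
  haveI : IsFiniteMeasure ν := ⟨by rw [hνuniv]; exact ENNReal.ofReal_lt_top⟩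
  -- step 2 : Jensen via Hölder
  have key : 2 * π * ‖g c‖ ^ q ≤ B := by
    rcases eq_or_lt_of_le hq with hq1 | hq1
    · have : B = ∫ θ, f θ ∂ν := by
        rw [hB]
        apply integral_congr_ae; filter_upwards with θ
        rw [← hq1, Real.rpow_one]
      rw [← hq1, Real.rpow_one, this]; exact h1
    · set p' := Real.conjExponent q with hp'
      have hpq : q.HolderConjugate p' := Real.HolderConjugate.conjExponent hq1
      obtain ⟨M, hM⟩ := (isCompact_Icc : IsCompact (Icc (0:ℝ) (2*π))).exists_bound_of_continuousOn
        hfc.continuousOn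
      have hfmem : MemLp f (ENNReal.ofReal q) ν :=
        MemLp.of_bound hfc.aestronglyMeasurable M
          ((ae_restrict_iff' measurableSet_Ioc).mpr (Filter.Eventually.of_forall
            fun x hx => hM x (Ioc_subset_Icc_self hx)))
      have honem : MemLp (fun _ : ℝ => (1:ℝ)) (ENNReal.ofReal p') ν := memLp_const 1
      have hH := integral_mul_le_Lp_mul_Lq_of_nonneg hpq
        (Filter.Eventually.of_forall fun θ => norm_nonneg _)
        (Filter.Eventually.of_forall fun _ => zero_le_one) hfmem honem
      simp only [mul_one, Real.one_rpow, integral_const, smul_eq_mul] at hH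
      rw [measureReal_def, hνuniv, ENNReal.toReal_ofReal (by positivity)] at hH
      -- hH : ∫ f ∂ν ≤ B^(1/q) * (2π * 1)^(1/p')  (roughly)
      have hchain : 2 * π * ‖g c‖ ≤ B ^ (1/q) * (2*π) ^ (1/p') := by
        refine h1.trans (le_trans hH ?_)
        apply le_of_eq; rw [hB]
      have h2 : (2*π * ‖g c‖) ^ q ≤ (B ^ (1/q) * (2*π) ^ (1/p')) ^ q :=
        Real.rpow_le_rpow (by positivity) hchain hq0.le
      have hL : (2*π * ‖g c‖) ^ q = (2*π) ^ q * ‖g c‖ ^ q :=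
        Real.mul_rpow (by positivity) (norm_nonneg _)
      have hR1 : (B ^ (1/q) * (2*π) ^ (1/p')) ^ q = B * (2*π) ^ (q - 1) := by
        have hexp : 1 / p' * q = q - 1 := by
          have hinv : q⁻¹ + p'⁻¹ = 1 := hpq.inv_add_inv_eq_one
          have hinv2 : p'⁻¹ = 1 - q⁻¹ := by linarith
          rw [one_div, hinv2, sub_mul, one_mul, inv_mul_cancel₀ hq0.ne']
        rw [Real.mul_rpow (Real.rpow_nonneg Bnn _) (Real.rpow_nonneg (by positivity) _),
          ← Real.rpow_mul Bnn, one_div_mul_cancel hq0.ne', Real.rpow_one,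
          ← Real.rpow_mul (by positivity : (0:ℝ) ≤ 2*π), hexp]
      have hsplit : (2*π) ^ q = (2*π) ^ (q-1) * (2*π) := by
        have : (2*π) ^ q = (2*π) ^ (q-1) * (2*π) ^ (1:ℝ) := by
          rw [← Real.rpow_add (by positivity)]; norm_num
        rw [this, Real.rpow_one]
      have Ppos : (0:ℝ) < (2*π) ^ (q-1) := Real.rpow_pos_of_pos (by positivity) _
      have h3 : (2*π)^(q-1) * (2*π*‖g c‖^q) ≤ (2*π)^(q-1) * B := by
        calc (2*π)^(q-1) * (2*π*‖g c‖^q) = (2*π)^q * ‖g c‖^q := by rw [hsplit]; ring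
        _ ≤ B * (2*π)^(q-1) := by rw [← hL, ← hR1]; exact h2
        _ = (2*π)^(q-1) * B := by ring
      exact (mul_le_mul_iff_right₀ Ppos).mp h3
  -- step 3 : change the interval
  have heq : ∫ θ in Ioo (-π) π, f θ ^ q = B := by
    have hper : Function.Periodic (fun θ => f θ ^ q) (2*π) :=
      (periodic_circleMap c R).comp fun z => ‖g z‖ ^ q
    calc ∫ θ in Ioo (-π) π, f θ ^ q = ∫ θ in Ioc (-π) π, f θ ^ q :=
          (integral_Ioc_eq_integral_Ioo).symm
    _ = ∫ θ in (-π)..π, f θ ^ q := (intervalIntegral.integral_of_le (by linarith)).symm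
    _ = ∫ θ in (0:ℝ)..(2*π), f θ ^ q := by
        have h4 := hper.intervalIntegral_add_eq (-π) 0
        have he : -π + 2*π = π := by ring
        rw [he, zero_add] at h4; exact h4
    _ = B := intervalIntegral.integral_of_le (by positivity)
  rw [heq]; exact key

lemma disc_smv_real {g : ℂ → ℂ} (hg : Differentiable ℂ g) {q : ℝ} (hq : 1 ≤ q)
    (c : ℂ) {r : ℝ} (hr : 0 < r) :
    ‖g c‖ ^ q * (π * r ^ 2) ≤ ∫ ζ in ball c r, ‖g ζ‖ ^ q := by
  classical
  have pi_pos := Real.pi_pos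
  have hq0 : (0:ℝ) < q := lt_of_lt_of_le one_pos hq
  have contq : Continuous (fun ζ : ℂ => ‖g ζ‖ ^ q) :=
    (hg.continuous.norm).rpow_const fun x => Or.inr hq0.le
  -- the explicit polar map
  set e : ℝ × ℝ → ℂ := fun p => ↑p.1 * (↑(Real.cos p.2) + ↑(Real.sin p.2) * Complex.I)
    with he_def
  have he_eq : ∀ p : ℝ × ℝ, c + e p = circleMap c p.1 p.2 := by
    intro p
    simp only [he_def, circleMap, Complex.exp_mul_I, Complex.ofReal_cos, Complex.ofReal_sin]
  have he_cont : Continuous e := by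
    apply Continuous.mul
    · exact Complex.continuous_ofReal.comp continuous_fst
    · exact ((Complex.continuous_ofReal.comp (Real.continuous_cos.comp continuous_snd)).add
        ((Complex.continuous_ofReal.comp (Real.continuous_sin.comp continuous_snd)).mul
          continuous_const))
  -- translation to center 0
  have htrans : ∫ ζ in ball c r, ‖g ζ‖ ^ q = ∫ ζ in ball (0:ℂ) r, ‖g (c + ζ)‖ ^ q := by
    rw [← integral_indicator measurableSet_ball, ← integral_indicator measurableSet_ball,
      ← integral_add_left_eq_self (μ := volume)
        (fun ζ : ℂ => (ball c r).indicator (fun ζ => ‖g ζ‖ ^ q) ζ) c]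
    apply integral_congr_ae
    filter_upwards with ζ
    have hmemiff : c + ζ ∈ ball c r ↔ ζ ∈ ball (0:ℂ) r := by
      simp [mem_ball_iff_norm]
    by_cases hmem : ζ ∈ ball (0:ℂ) r
    · rw [Set.indicator_of_mem (hmemiff.mpr hmem), Set.indicator_of_mem hmem]
    · rw [Set.indicator_of_notMem (fun hc => hmem (hmemiff.mp hc)),
        Set.indicator_of_notMem hmem]
  -- polar coordinates
  set F : ℂ → ℝ := fun ζ => (ball (0:ℂ) r).indicator (fun ζ => ‖g (c + ζ)‖ ^ q) ζ with hF_def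
  have hpolar := Complex.integral_comp_polarCoord_symm F
  -- rewrite the polar integral as an integral over Ioo 0 r ×ˢ Ioo (-π) π
  have hsub : (Ioo (0:ℝ) r ×ˢ Ioo (-π) π) ⊆ polarCoord.target := by
    rw [polarCoord_target]
    exact Set.prod_mono (fun x hx => hx.1) subset_rfl
  have heqon : EqOn (fun p : ℝ × ℝ => p.1 • F (Complex.polarCoord.symm p))
      ((Ioo (0:ℝ) r ×ˢ Ioo (-π) π).indicator (fun p => p.1 * ‖g (c + e p)‖ ^ q))
      polarCoord.target := by
    intro p hp
    rw [polarCoord_target] at hp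
    have hsymm : Complex.polarCoord.symm p = e p := Complex.polarCoord_symm_apply p
    have habs : ‖Complex.polarCoord.symm p‖ = p.1 := by
      rw [Complex.norm_polarCoord_symm, abs_of_pos hp.1]
    have hball : Complex.polarCoord.symm p ∈ ball (0:ℂ) r ↔ p.1 < r := by
      rw [mem_ball_zero_iff, habs]
    have hkey : F (Complex.polarCoord.symm p) = if p.1 < r then ‖g (c + e p)‖ ^ q else 0 := by
      show (ball (0:ℂ) r).indicator (fun ζ => ‖g (c + ζ)‖ ^ q) (Complex.polarCoord.symm p) = _
      rw [Set.indicator_apply]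
      by_cases hlt : p.1 < r
      · rw [if_pos (hball.mpr hlt), if_pos hlt, hsymm]
      · rw [if_neg (fun hc => hlt (hball.mp hc)), if_neg hlt]
    show p.1 • F (Complex.polarCoord.symm p) = _
    rw [hkey, Set.indicator_apply]
    by_cases hlt : p.1 < r
    · rw [if_pos hlt, if_pos (show p ∈ Ioo (0:ℝ) r ×ˢ Ioo (-π) π from ⟨⟨hp.1, hlt⟩, hp.2⟩),
        smul_eq_mul]
    · rw [if_neg hlt, if_neg (fun hc : p ∈ Ioo (0:ℝ) r ×ˢ Ioo (-π) π => hlt hc.1.2), smul_zero]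
  have hstep : (∫ p in polarCoord.target, p.1 • F (Complex.polarCoord.symm p))
      = ∫ p in Ioo (0:ℝ) r ×ˢ Ioo (-π) π, p.1 * ‖g (c + e p)‖ ^ q := by
    rw [setIntegral_congr_fun (polarCoord.open_target.measurableSet) heqon,
      setIntegral_indicator ((measurableSet_Ioo).prod measurableSet_Ioo),
      Set.inter_eq_self_of_subset_right hsub]
  -- integrability on the rectangle
  have hcontP : Continuous (fun p : ℝ × ℝ => p.1 * ‖g (c + e p)‖ ^ q) :=
    continuous_fst.mul (contq.comp (continuous_const.add he_cont))
  have hIntP : IntegrableOn (fun p : ℝ × ℝ => p.1 * ‖g (c + e p)‖ ^ q)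
      (Ioo (0:ℝ) r ×ˢ Ioo (-π) π) volume :=
    (hcontP.continuousOn.integrableOn_compact (isCompact_Icc.prod isCompact_Icc)).mono_set
      (Set.prod_mono Ioo_subset_Icc_self Ioo_subset_Icc_self)

  -- Fubini
  have hvol : (volume : Measure (ℝ × ℝ)) = (volume : Measure ℝ).prod volume :=
    Measure.volume_eq_prod ℝ ℝ
  rw [hvol] at hIntP
  have hfub : ∫ p in Ioo (0:ℝ) r ×ˢ Ioo (-π) π, p.1 * ‖g (c + e p)‖ ^ q
      = ∫ R in Ioo (0:ℝ) r, ∫ θ in Ioo (-π) π, R * ‖g (c + e (R, θ))‖ ^ q := by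
    rw [hvol]
    exact setIntegral_prod _ hIntP
  -- lower bound on inner integral
  have hinner : ∀ R ∈ Ioo (0:ℝ) r,
      R * (2 * π * ‖g c‖ ^ q) ≤ ∫ θ in Ioo (-π) π, R * ‖g (c + e (R, θ))‖ ^ q := by
    intro R hRmem
    have : ∫ θ in Ioo (-π) π, R * ‖g (c + e (R, θ))‖ ^ q
        = R * ∫ θ in Ioo (-π) π, ‖g (circleMap c R θ)‖ ^ q := by
      rw [← integral_const_mul]
      apply integral_congr_ae; filter_upwards with θ
      rw [he_eq (R, θ)]
    rw [this]
    exact mul_le_mul_of_nonneg_left (circle_mean_norm_rpow hg hq c hRmem.1) hRmem.1.le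
  -- integrate the lower bound
  have hIout : IntegrableOn (fun R => ∫ θ in Ioo (-π) π, R * ‖g (c + e (R, θ))‖ ^ q)
      (Ioo (0:ℝ) r) volume := by
    have h5 := hIntP
    rw [IntegrableOn, ← Measure.prod_restrict] at h5
    exact h5.integral_prod_left
  have hmono : ∫ R in Ioo (0:ℝ) r, R * (2 * π * ‖g c‖ ^ q)
      ≤ ∫ R in Ioo (0:ℝ) r, ∫ θ in Ioo (-π) π, R * ‖g (c + e (R, θ))‖ ^ q := by
    apply setIntegral_mono_on
    · exact ((continuous_id.mul continuous_const).continuousOn.integrableOn_compact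
        isCompact_Icc).mono_set Ioo_subset_Icc_self
    · exact hIout
    · exact measurableSet_Ioo
    · exact hinner
  have hval : ∫ R in Ioo (0:ℝ) r, R * (2 * π * ‖g c‖ ^ q)
      = (r^2/2) * (2 * π * ‖g c‖ ^ q) := by
    rw [integral_mul_const]
    congr 1
    have h1 : ∫ R in Ioo (0:ℝ) r, R = ∫ R in Ioc (0:ℝ) r, R := integral_Ioc_eq_integral_Ioo.symm
    rw [h1, ← intervalIntegral.integral_of_le hr.le, integral_id]
    ring
  calc ‖g c‖ ^ q * (π * r ^ 2) = (r^2/2) * (2 * π * ‖g c‖ ^ q) := by ring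
  _ ≤ ∫ R in Ioo (0:ℝ) r, ∫ θ in Ioo (-π) π, R * ‖g (c + e (R, θ))‖ ^ q := by
      rw [← hval]; exact hmono
  _ = ∫ p in Ioo (0:ℝ) r ×ˢ Ioo (-π) π, p.1 * ‖g (c + e p)‖ ^ q := hfub.symm
  _ = ∫ p in polarCoord.target, p.1 • F (Complex.polarCoord.symm p) := hstep.symm
  _ = ∫ ζ, F ζ := hpolar
  _ = ∫ ζ in ball (0:ℂ) r, ‖g (c + ζ)‖ ^ q := integral_indicator measurableSet_ball
  _ = ∫ ζ in ball c r, ‖g ζ‖ ^ q := htrans.symm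

lemma disc_smv {g : ℂ → ℂ} (hg : Differentiable ℂ g) {q : ℝ} (hq : 1 ≤ q)
    (c : ℂ) {r : ℝ} (hr : 0 < r) :
    ENNReal.ofReal (‖g c‖ ^ q) * volume (ball (0:ℂ) r)
      ≤ ∫⁻ ζ in ball c r, ENNReal.ofReal (‖g ζ‖ ^ q) := by
  have hq0 : (0:ℝ) < q := lt_of_lt_of_le one_pos hq
  have contq : Continuous (fun ζ : ℂ => ‖g ζ‖ ^ q) :=
    (hg.continuous.norm).rpow_const fun x => Or.inr hq0.le
  have hint : IntegrableOn (fun ζ : ℂ => ‖g ζ‖ ^ q) (ball c r) volume :=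
    (contq.continuousOn.integrableOn_compact (isCompact_closedBall c r)).mono_set
      ball_subset_closedBall
  have hball : volume (ball (0:ℂ) r) = ENNReal.ofReal (π * r ^ 2) := by
    rw [Complex.volume_ball, ENNReal.ofReal_mul Real.pi_pos.le,
      ENNReal.ofReal_pow hr.le]
    rw [← NNReal.coe_real_pi, ENNReal.ofReal_coe_nnreal]
    ring
  calc ENNReal.ofReal (‖g c‖ ^ q) * volume (ball (0:ℂ) r)
      = ENNReal.ofReal (‖g c‖ ^ q * (π * r ^ 2)) := by
        rw [hball, ENNReal.ofReal_mul (Real.rpow_nonneg (norm_nonneg _) q)]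
  _ ≤ ENNReal.ofReal (∫ ζ in ball c r, ‖g ζ‖ ^ q) :=
        ENNReal.ofReal_le_ofReal (disc_smv_real hg hq c hr)
  _ = ∫⁻ ζ in ball c r, ENNReal.ofReal (‖g ζ‖ ^ q) :=
        ofReal_integral_eq_lintegral_ofReal hint
          (Filter.Eventually.of_forall fun ζ => Real.rpow_nonneg (norm_nonneg _) q)

lemma pi_smv (n : ℕ) {q : ℝ} (hq : 1 ≤ q) {r : ℝ} (hr : 0 < r) :
    ∀ (G : (Fin n → ℂ) → ℂ), Continuous G →
    (∀ (x : Fin n → ℂ) (i : Fin n), Differentiable ℂ (fun ζ => G (Function.update x i ζ))) →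
    ∀ (c : Fin n → ℂ),
    ENNReal.ofReal (‖G c‖ ^ q) * (volume (ball (0:ℂ) r)) ^ n ≤
      ∫⁻ x in Set.pi Set.univ (fun i => ball (c i) r), ENNReal.ofReal (‖G x‖ ^ q) := by
  have hq0 : (0:ℝ) < q := lt_of_lt_of_le one_pos hq
  induction n with
  | zero =>
    intro G hGc hGd c
    have huniv : (Set.pi Set.univ fun i : Fin 0 => ball (c i) r) = Set.univ := by
      ext x; simp
    have hvol : (volume : Measure (Fin 0 → ℂ)) Set.univ = 1 := by
      rw [MeasureTheory.volume_pi, Measure.pi_univ]; simp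
    rw [huniv, pow_zero, mul_one, Measure.restrict_univ]
    have hxc : ∀ x : Fin 0 → ℂ, G x = G c := fun x => by rw [Subsingleton.elim x c]
    refine le_of_eq ?_
    calc ENNReal.ofReal (‖G c‖ ^ q)
        = ENNReal.ofReal (‖G c‖ ^ q) * (volume : Measure (Fin 0 → ℂ)) Set.univ := by
          rw [hvol, mul_one]
    _ = ∫⁻ _x, ENNReal.ofReal (‖G c‖ ^ q) := (lintegral_const _).symm
    _ = ∫⁻ x, ENNReal.ofReal (‖G x‖ ^ q) := by
          apply lintegral_congr; intro x; rw [hxc x]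
  | succ n ih =>
    intro G hGc hGd c
    classical
    set V : ℝ≥0∞ := volume (ball (0:ℂ) r) with hV
    set e := MeasurableEquiv.piFinSuccAbove (fun _ : Fin (n+1) => ℂ) 0 with he_def
    have mp : MeasurePreserving e (Measure.pi fun _ => volume)
        ((volume : Measure ℂ).prod (Measure.pi fun _ : Fin n => volume)) :=
      measurePreserving_piFinSuccAbove (fun _ : Fin (n+1) => (volume : Measure ℂ)) 0
    set s0 : Set ℂ := ball (c 0) r with hs0
    set S : Set (Fin n → ℂ) := Set.pi Set.univ (fun j : Fin n => ball (Fin.tail c j) r) with hS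
    set Φ : ℂ × (Fin n → ℂ) → ℝ≥0∞ := fun y => ENNReal.ofReal (‖G (Fin.cons y.1 y.2)‖ ^ q)
      with hΦ
    have hmeasS : MeasurableSet (s0 ×ˢ S) :=
      measurableSet_ball.prod (MeasurableSet.univ_pi fun j => measurableSet_ball)
    have hcons_cont : Continuous fun y : ℂ × (Fin n → ℂ) => (Fin.cons y.1 y.2 : Fin (n+1) → ℂ) := by
      apply continuous_pi
      intro j
      refine Fin.cases ?_ ?_ j
      · simpa using continuous_fst
      · intro i; simp only [Fin.cons_succ]; exact (continuous_apply i).comp continuous_snd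
    have hΦcont : Continuous Φ :=
      ENNReal.continuous_ofReal.comp
        (((hGc.norm).rpow_const fun x => Or.inr hq0.le).comp hcons_cont)
    -- transport to the product
    have htrans : ∫⁻ x in Set.pi Set.univ (fun i : Fin (n+1) => ball (c i) r),
        ENNReal.ofReal (‖G x‖ ^ q)
        = ∫⁻ ζ in s0, ∫⁻ x in S, Φ (ζ, x) := by
      rw [← lintegral_indicator (MeasurableSet.univ_pi fun i => measurableSet_ball) _,
        show (volume : Measure (Fin (n+1) → ℂ)) = Measure.pi fun _ => volume from
          MeasureTheory.volume_pi]
      have hcomp : ∀ x : Fin (n+1) → ℂ,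
          (Set.pi Set.univ (fun i => ball (c i) r)).indicator
            (fun x => ENNReal.ofReal (‖G x‖ ^ q)) x
          = ((s0 ×ˢ S).indicator Φ) (e x) := by
        intro x
        have hx : x = Fin.cons (x 0) (Fin.tail x) := (Fin.cons_self_tail x).symm
        have hex : e x = (x 0, Fin.tail x) := rfl
        rw [hex, Set.indicator_apply, Set.indicator_apply]
        have hmem : x ∈ (Set.pi Set.univ fun i : Fin (n+1) => ball (c i) r)
            ↔ (x 0, Fin.tail x) ∈ s0 ×ˢ S := by
          constructor
          · intro hm
            exact ⟨hm 0 (Set.mem_univ _), fun j _ => hm j.succ (Set.mem_univ _)⟩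
          · intro hm i _
            refine Fin.cases ?_ ?_ i
            · exact hm.1
            · intro j; exact hm.2 j (Set.mem_univ _)
        by_cases hm : x ∈ (Set.pi Set.univ fun i : Fin (n+1) => ball (c i) r)
        · rw [if_pos (hmem.mp hm), if_pos hm]
          show ENNReal.ofReal (‖G x‖ ^ q) = ENNReal.ofReal (‖G (Fin.cons (x 0) (Fin.tail x))‖ ^ q)
          rw [← hx]
        · rw [if_neg (fun hc' => hm (hmem.mpr hc')), if_neg hm]
      rw [lintegral_congr hcomp,
        mp.lintegral_comp (hΦcont.measurable.indicator hmeasS),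
        lintegral_indicator hmeasS _, ← Measure.prod_restrict,
        lintegral_prod _ (hΦcont.measurable.aemeasurable)]
      rw [show (Measure.pi fun _ : Fin n => (volume : Measure ℂ))
        = (volume : Measure (Fin n → ℂ)) from MeasureTheory.volume_pi.symm]
    -- the sliced functions
    have hslice : ∀ ζ : ℂ,
        ENNReal.ofReal (‖G (Fin.cons ζ (Fin.tail c))‖ ^ q) * V ^ n
          ≤ ∫⁻ x in S, Φ (ζ, x) := by
      intro ζ
      have hGζc : Continuous fun x : Fin n → ℂ => G (Fin.cons ζ x) :=
        (hGc.comp hcons_cont).comp (continuous_const.prodMk continuous_id)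
      have hGζd : ∀ (x : Fin n → ℂ) (i : Fin n),
          Differentiable ℂ (fun ξ => G (Fin.cons ζ (Function.update x i ξ))) := by
        intro x i
        have : (fun ξ : ℂ => G (Fin.cons ζ (Function.update x i ξ)))
            = fun ξ : ℂ => G (Function.update (Fin.cons ζ x) i.succ ξ) := by
          funext ξ; rw [Fin.cons_update]
        rw [this]
        exact hGd (Fin.cons ζ x) i.succ
      exact ih (fun x => G (Fin.cons ζ x)) hGζc hGζd (Fin.tail c)
    -- the center function
    have hg0 : Differentiable ℂ (fun ζ : ℂ => G (Fin.cons ζ (Fin.tail c))) := by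
      have : (fun ζ : ℂ => G (Fin.cons ζ (Fin.tail c)))
          = fun ζ : ℂ => G (Function.update c 0 ζ) := by
        funext ζ
        conv_rhs => rw [← Fin.cons_self_tail c, Fin.update_cons_zero]
      rw [this]
      exact hGd c 0
    have hmeasg0 : Measurable fun ζ : ℂ => ENNReal.ofReal (‖G (Fin.cons ζ (Fin.tail c))‖ ^ q) :=
      ((hg0.continuous.norm).rpow_const fun x => Or.inr hq0.le).measurable.ennreal_ofReal
    calc ENNReal.ofReal (‖G c‖ ^ q) * V ^ (n+1)
        = (ENNReal.ofReal (‖G (Fin.cons (c 0) (Fin.tail c))‖ ^ q) * V) * V ^ n := by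
          rw [Fin.cons_self_tail, pow_succ]; ring
    _ ≤ (∫⁻ ζ in s0, ENNReal.ofReal (‖G (Fin.cons ζ (Fin.tail c))‖ ^ q)) * V ^ n := by
          apply mul_le_mul_left
          exact disc_smv hg0 hq (c 0) hr
    _ = ∫⁻ ζ in s0, ENNReal.ofReal (‖G (Fin.cons ζ (Fin.tail c))‖ ^ q) * V ^ n :=
          (lintegral_mul_const _ hmeasg0).symm
    _ ≤ ∫⁻ ζ in s0, ∫⁻ x in S, Φ (ζ, x) := lintegral_mono fun ζ => hslice ζ
    _ = _ := htrans.symm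

instance haarCn (n : ℕ) : (volume : Measure (Cn n)).IsAddHaarMeasure :=
  inferInstanceAs ((stdOrthonormalBasis ℝ (Cn n)).toBasis.addHaar.IsAddHaarMeasure)

/-- the coordinate equivalence, as a continuous linear equivalence -/
def cnCLE (n : ℕ) : Cn n ≃L[ℂ] (Fin n → ℂ) :=
  PiLp.continuousLinearEquiv 2 ℂ (fun _ : Fin n => ℂ)

/-- the coordinate equivalence, as a measurable equivalence -/
def cnME (n : ℕ) : Cn n ≃ᵐ (Fin n → ℂ) :=
  (cnCLE n).toHomeomorph.toMeasurableEquiv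

lemma cnME_apply (n : ℕ) (w : Cn n) (i : Fin n) : cnME n w i = w i := rfl

lemma cnME_symm_apply (n : ℕ) (x : Fin n → ℂ) (i : Fin n) : (cnME n).symm x i = x i := rfl

lemma cnME_coe (n : ℕ) : (⇑(cnME n) : Cn n → (Fin n → ℂ)) = ⇑(cnCLE n) := rfl

instance cnMap_haar (n : ℕ) : ((volume : Measure (Cn n)).map (cnME n)).IsAddHaarMeasure := by
  rw [cnME_coe]
  exact (cnCLE n).isAddHaarMeasure_map volume

/-- the density of the transported measure -/
def cnFactor (n : ℕ) : ℝ≥0 :=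
  Measure.addHaarScalarFactor ((volume : Measure (Cn n)).map (cnME n))
    (volume : Measure (Fin n → ℂ))

lemma cnMap_eq (n : ℕ) :
    (volume : Measure (Cn n)).map (cnME n) = cnFactor n • (volume : Measure (Fin n → ℂ)) := Measure.isAddLeftInvariant_eq_smul
    ((volume : Measure (Cn n)).map (cnME n)) (volume : Measure (Fin n → ℂ))

lemma cnFactor_pos (n : ℕ) : 0 < cnFactor n := Measure.addHaarScalarFactor_pos_of_isAddHaarMeasure
    ((volume : Measure (Cn n)).map (cnME n)) (volume : Measure (Fin n → ℂ))

end

lemma cn_smv (n : ℕ) (hn : 1 ≤ n) {q : ℝ} (hq : 1 ≤ q) {G : Cn n → ℂ}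
    (hG : Differentiable ℂ G) (z : Cn n) {δ : ℝ} (hδ : 0 < δ) :
    ENNReal.ofReal (‖G z‖ ^ q) * ((cnFactor n : ℝ≥0∞) * (volume (ball (0:ℂ) (δ / n))) ^ n)
      ≤ ∫⁻ w in ball z δ, ENNReal.ofReal (‖G w‖ ^ q) := by
  classical
  have hq0 : (0:ℝ) < q := lt_of_lt_of_le one_pos hq
  have hnpos : (0:ℝ) < n := by exact_mod_cast hn
  set r : ℝ := δ / n with hr_def
  have hr : 0 < r := div_pos hδ hnpos
  set piS : Set (Fin n → ℂ) := Set.pi Set.univ (fun i => ball ((cnME n z) i) r) with hpiS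
  set P : Set (Cn n) := (cnME n) ⁻¹' piS with hP
  have hmeas_piS : MeasurableSet piS := MeasurableSet.univ_pi fun i => measurableSet_ball
  -- the polydisc is inside the ball
  have hPsub : P ⊆ ball z δ := by
    intro w hw
    have hw' : ∀ i, dist (w i) (z i) < r := by
      intro i
      have := hw i (Set.mem_univ i)
      simpa [cnME_apply] using this
    rw [mem_ball, EuclideanSpace.dist_eq]
    haveI : Nonempty (Fin n) := Fin.pos_iff_nonempty.mp (by exact_mod_cast hn)
    have hsum : (∑ i, dist (w i) (z i) ^ 2) < ∑ _i : Fin n, r ^ 2 := by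
      apply Finset.sum_lt_sum_of_nonempty Finset.univ_nonempty
      intro i _
      exact pow_lt_pow_left₀ (hw' i) dist_nonneg (by norm_num)
    have hsum2 : (∑ _i : Fin n, r ^ 2) ≤ δ ^ 2 := by
      rw [Finset.sum_const, Finset.card_univ, Fintype.card_fin, nsmul_eq_mul, hr_def, div_pow]
      have h9 : (n:ℝ) * (δ^2 / (n:ℝ)^2) = δ^2 / n := by
        rw [eq_div_iff hnpos.ne']
        field_simp
      rw [h9]
      exact div_le_self (sq_nonneg δ) (by exact_mod_cast hn)
    calc Real.sqrt (∑ i, dist (w i) (z i) ^ 2)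
        < Real.sqrt (δ ^ 2) := by
          apply Real.sqrt_lt_sqrt (Finset.sum_nonneg fun i _ => sq_nonneg _)
          exact lt_of_lt_of_le hsum hsum2
    _ = δ := Real.sqrt_sq hδ.le
  -- transport the polydisc integral
  set G' : (Fin n → ℂ) → ℂ := fun x => G ((cnME n).symm x) with hG'
  have hGcont' : Continuous G' := by
    apply hG.continuous.comp
    show Continuous ⇑(cnME n).symm
    exact (cnCLE n).symm.continuous
  have hGdiff' : ∀ (x : Fin n → ℂ) (i : Fin n),
      Differentiable ℂ (fun ζ => G' (Function.update x i ζ)) := by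
    intro x i
    have hupd : Differentiable ℂ (fun ζ : ℂ => (Function.update x i ζ : Fin n → ℂ)) := by
      rw [differentiable_pi]
      intro j
      by_cases hji : j = i
      · subst hji
        simp only [Function.update_self]
        exact differentiable_id
      · have : (fun ζ : ℂ => Function.update x i ζ j) = fun _ => x j := by
          funext ζ; rw [Function.update_of_ne hji]
        rw [this]
        exact differentiable_const _
    have hsym : Differentiable ℂ (⇑(cnME n).symm : (Fin n → ℂ) → Cn n) :=
      ((cnCLE n).symm : (Fin n → ℂ) →L[ℂ] Cn n).differentiable
    exact hG.comp (hsym.comp hupd)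
  have hpi := pi_smv n hq hr G' hGcont' hGdiff' (fun i => (cnME n z) i)
  have hcenter : G' (fun i => (cnME n z) i) = G z := by
    have : (fun i => (cnME n z) i) = cnME n z := rfl
    rw [hG', this]
    exact congrArg G ((cnME n).symm_apply_apply z)
  -- rewrite the P-integral through the map
  have htrans : ∫⁻ w in P, ENNReal.ofReal (‖G w‖ ^ q)
      = (cnFactor n : ℝ≥0∞) * ∫⁻ x in piS, ENNReal.ofReal (‖G' x‖ ^ q) := by
    have h1 : ∫⁻ x, piS.indicator (fun x => ENNReal.ofReal (‖G' x‖ ^ q)) x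
          ∂((volume : Measure (Cn n)).map (cnME n))
        = ∫⁻ w, piS.indicator (fun x => ENNReal.ofReal (‖G' x‖ ^ q)) (cnME n w) ∂volume :=
      lintegral_map_equiv _ (cnME n)
    have h2 : ∀ w : Cn n, piS.indicator (fun x => ENNReal.ofReal (‖G' x‖ ^ q)) (cnME n w)
        = P.indicator (fun w => ENNReal.ofReal (‖G w‖ ^ q)) w := by
      intro w
      rw [Set.indicator_apply, Set.indicator_apply]
      have hmem : cnME n w ∈ piS ↔ w ∈ P := Iff.rfl
      by_cases hm : w ∈ P
      · rw [if_pos (hmem.mpr hm), if_pos hm, hG']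
        exact congrArg (fun u => ENNReal.ofReal (‖G u‖ ^ q)) ((cnME n).symm_apply_apply w)
      · rw [if_neg (fun hc => hm (hmem.mp hc)), if_neg hm]
    calc ∫⁻ w in P, ENNReal.ofReal (‖G w‖ ^ q)
        = ∫⁻ w, P.indicator (fun w => ENNReal.ofReal (‖G w‖ ^ q)) w ∂volume :=
          (lintegral_indicator ((hmeas_piS.preimage (cnME n).measurable)) _).symm
    _ = ∫⁻ x, piS.indicator (fun x => ENNReal.ofReal (‖G' x‖ ^ q)) x
          ∂((volume : Measure (Cn n)).map (cnME n)) := by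
        rw [h1]; exact lintegral_congr fun w => (h2 w).symm
    _ = (cnFactor n : ℝ≥0∞) * ∫⁻ x, piS.indicator (fun x => ENNReal.ofReal (‖G' x‖ ^ q)) x
          ∂(volume : Measure (Fin n → ℂ)) := by
        rw [cnMap_eq n, ENNReal.smul_def, lintegral_smul_measure, smul_eq_mul]
    _ = (cnFactor n : ℝ≥0∞) * ∫⁻ x in piS, ENNReal.ofReal (‖G' x‖ ^ q) := by
        rw [lintegral_indicator hmeas_piS]
  calc ENNReal.ofReal (‖G z‖ ^ q) * ((cnFactor n : ℝ≥0∞) * (volume (ball (0:ℂ) r)) ^ n)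
      = (cnFactor n : ℝ≥0∞) * (ENNReal.ofReal (‖G' (fun i => (cnME n z) i)‖ ^ q)
          * (volume (ball (0:ℂ) r)) ^ n) := by rw [hcenter]; ring
  _ ≤ (cnFactor n : ℝ≥0∞) * ∫⁻ x in piS, ENNReal.ofReal (‖G' x‖ ^ q) :=
      mul_le_mul_right hpi _
  _ = ∫⁻ w in P, ENNReal.ofReal (‖G w‖ ^ q) := htrans.symm
  _ ≤ ∫⁻ w in ball z δ, ENNReal.ofReal (‖G w‖ ^ q) := lintegral_mono_set hPsub

lemma weighted_smv (n : ℕ) (hn : 1 ≤ n) {α q δ : ℝ} (hα : 0 < α) (hq : 1 ≤ q) (hδ : 0 < δ)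
    {h : Cn n → ℂ} (hh : Differentiable ℂ h) (z : Cn n) :
    ENNReal.ofReal (‖h z‖ ^ q * Real.exp (-(α * q / 2) * ‖z‖ ^ 2)) *
      ((cnFactor n : ℝ≥0∞) * (volume (ball (0:ℂ) (δ / n))) ^ n)
    ≤ ENNReal.ofReal (Real.exp (α * q / 2 * δ ^ 2)) *
      ∫⁻ w in ball z δ, ENNReal.ofReal (‖h w‖ ^ q * Real.exp (-(α * q / 2) * ‖w‖ ^ 2)) := by
  have hq0 : (0:ℝ) < q := lt_of_lt_of_le one_pos hq
  set G : Cn n → ℂ :=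
    fun w => h w * Complex.exp ((α:ℂ) * ((((‖z‖^2/2 : ℝ)) : ℂ) - (inner ℂ z w : ℂ))) with hG_def
  have hinner : Differentiable ℂ (fun w : Cn n => (inner ℂ z w : ℂ)) :=
    (innerSL ℂ z).differentiable
  have hGdiff : Differentiable ℂ G :=
    hh.mul ((((differentiable_const (((‖z‖^2/2 : ℝ)) : ℂ)).sub hinner).const_mul (α:ℂ)).cexp)
  have hnorm : ∀ w, ‖G w‖ = ‖h w‖ *
      Real.exp (α / 2 * ‖w - z‖ ^ 2 - α / 2 * ‖w‖ ^ 2) := by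
    intro w
    rw [hG_def]
    show ‖h w * _‖ = _
    rw [norm_mul, Complex.norm_exp]
    congr 2
    rw [Complex.re_ofReal_mul, Complex.sub_re, Complex.ofReal_re]
    have hns : ‖w - z‖ ^ 2 = ‖w‖ ^ 2 - 2 * RCLike.re (inner ℂ w z : ℂ) + ‖z‖ ^ 2 :=
      norm_sub_sq w z
    have hre : RCLike.re (inner ℂ w z : ℂ) = (inner ℂ z w : ℂ).re := by
      rw [RCLike.re_to_complex, ← inner_conj_symm w z, Complex.conj_re]
    rw [hre] at hns
    nlinarith [hns]
  have hexp_rpow : ∀ t : ℝ, (Real.exp t) ^ q = Real.exp (t * q) := fun t =>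
    (Real.exp_mul t q).symm
  have hnormq : ∀ w, ‖G w‖ ^ q = ‖h w‖ ^ q *
      Real.exp ((α / 2 * ‖w - z‖ ^ 2 - α / 2 * ‖w‖ ^ 2) * q) := by
    intro w
    rw [hnorm w, Real.mul_rpow (norm_nonneg _) (Real.exp_nonneg _), hexp_rpow]
  have key1 : ‖G z‖ ^ q = ‖h z‖ ^ q * Real.exp (-(α * q / 2) * ‖z‖ ^ 2) := by
    rw [hnormq z]
    congr 2
    rw [sub_self, norm_zero]
    ring
  have key2 : ∀ w ∈ ball z δ, ‖G w‖ ^ q ≤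
      (‖h w‖ ^ q * Real.exp (-(α * q / 2) * ‖w‖ ^ 2)) * Real.exp (α * q / 2 * δ ^ 2) := by
    intro w hw
    rw [hnormq w]
    have hsplit : Real.exp ((α / 2 * ‖w - z‖ ^ 2 - α / 2 * ‖w‖ ^ 2) * q)
        = Real.exp (-(α * q / 2) * ‖w‖ ^ 2) * Real.exp (α * q / 2 * ‖w - z‖ ^ 2) := by
      rw [← Real.exp_add]
      congr 1
      ring
    rw [hsplit, ← mul_assoc]
    apply mul_le_mul_of_nonneg_left _ (by positivity)
    apply Real.exp_le_exp.mpr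
    apply mul_le_mul_of_nonneg_left _ (by positivity)
    have hd : ‖w - z‖ ≤ δ := by
      rw [← dist_eq_norm]
      exact (mem_ball.mp hw).le
    exact pow_le_pow_left₀ (norm_nonneg _) hd 2
  calc ENNReal.ofReal (‖h z‖ ^ q * Real.exp (-(α * q / 2) * ‖z‖ ^ 2)) *
        ((cnFactor n : ℝ≥0∞) * (volume (ball (0:ℂ) (δ / n))) ^ n)
      = ENNReal.ofReal (‖G z‖ ^ q) *
        ((cnFactor n : ℝ≥0∞) * (volume (ball (0:ℂ) (δ / n))) ^ n) := by rw [key1]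
  _ ≤ ∫⁻ w in ball z δ, ENNReal.ofReal (‖G w‖ ^ q) := cn_smv n hn hq hGdiff z hδ
  _ ≤ ∫⁻ w in ball z δ, ENNReal.ofReal (Real.exp (α * q / 2 * δ ^ 2)) *
        ENNReal.ofReal (‖h w‖ ^ q * Real.exp (-(α * q / 2) * ‖w‖ ^ 2)) := by
      apply lintegral_mono_ae
      filter_upwards [ae_restrict_mem measurableSet_ball] with w hw
      rw [← ENNReal.ofReal_mul (by positivity)]
      apply ENNReal.ofReal_le_ofReal
      calc ‖G w‖ ^ q ≤ (‖h w‖ ^ q * Real.exp (-(α * q / 2) * ‖w‖ ^ 2)) *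
            Real.exp (α * q / 2 * δ ^ 2) := key2 w hw
      _ = Real.exp (α * q / 2 * δ ^ 2) * (‖h w‖ ^ q * Real.exp (-(α * q / 2) * ‖w‖ ^ 2)) := by
            ring
  _ = ENNReal.ofReal (Real.exp (α * q / 2 * δ ^ 2)) *
      ∫⁻ w in ball z δ, ENNReal.ofReal (‖h w‖ ^ q * Real.exp (-(α * q / 2) * ‖w‖ ^ 2)) :=
      lintegral_const_mul' _ _ ENNReal.ofReal_ne_top

end AuxiliarySampling

/-- **Sampling inequality.** For `1 ≤ q < ∞` and a `δ`-lattice `{z_j}` with covering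
multiplicity at most `N` at radius `δ`, there is `C > 0` such that for every `h ∈ F^q_α`,
`∑_j |h(z_j)|^q e^{−αq|z_j|²/2} ≤ C ‖h‖_{q,α}^q`. -/
theorem lattice_sampling (n : ℕ) (hn : 1 ≤ n) (α q δ : ℝ) (hα : 0 < α) (hq : 1 ≤ q)
    (hδ : 0 < δ) (N : ℕ) (zs : ℕ → Cn n) (hlat : IsLattice n δ zs)
    (hN : CoverMult n δ zs N) :
    ∃ C : ℝ, 0 < C ∧
      ∀ h : Cn n → ℂ, Differentiable ℂ h → eNormLpα n q α h < ∞ →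
        ∑' j, ENNReal.ofReal (‖h (zs j)‖ ^ q * Real.exp (-(α * q / 2) * ‖zs j‖ ^ 2)) ≤
          ENNReal.ofReal C * eNormLpα n q α h ^ q := by
  classical
  have hq0 : (0:ℝ) < q := lt_of_lt_of_le one_pos hq
  have hnpos : (0:ℝ) < n := by exact_mod_cast hn
  have hr : (0:ℝ) < δ / n := div_pos hδ hnpos
  set V : ℝ≥0∞ := volume (ball (0:ℂ) (δ / n)) with hV
  set c₀ : ℝ≥0∞ := (cnFactor n : ℝ≥0∞) * V ^ n with hc₀
  have hV0 : V ≠ 0 := (measure_ball_pos volume (0:ℂ) hr).ne'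
  have hVtop : V ≠ ⊤ := measure_ball_lt_top.ne
  have hc₀0 : c₀ ≠ 0 := by
    apply mul_ne_zero
    · exact_mod_cast (cnFactor_pos n).ne'
    · exact pow_ne_zero n hV0
  have hc₀top : c₀ ≠ ⊤ := by
    apply ENNReal.mul_ne_top
    · exact ENNReal.coe_ne_top
    · exact (ENNReal.pow_ne_top hVtop)
  set E : ℝ≥0∞ := ENNReal.ofReal (Real.exp (α * q / 2 * δ ^ 2)) with hE
  set K : ℝ≥0∞ := E * (N : ℝ≥0∞) / c₀ with hK
  have hKtop : K ≠ ⊤ :=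
    (ENNReal.div_lt_top (ENNReal.mul_ne_top ENNReal.ofReal_ne_top (ENNReal.natCast_ne_top N))
      hc₀0).ne
  refine ⟨K.toReal + 1, by positivity, ?_⟩
  intro h hdiff _hfin
  set F : Cn n → ℝ≥0∞ :=
    fun w => ENNReal.ofReal (‖h w‖ ^ q * Real.exp (-(α * q / 2) * ‖w‖ ^ 2)) with hF
  have hcont1 : Continuous fun w : Cn n => ‖h w‖ ^ q :=
    hdiff.continuous.norm.rpow_const fun _ => Or.inr hq0.le
  have hcont2 : Continuous fun w : Cn n => Real.exp (-(α*q/2) * ‖w‖^2) :=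
    Real.continuous_exp.comp (continuous_const.mul (continuous_norm.pow 2))
  have hFmeas : Measurable F := ((hcont1.mul hcont2).measurable).ennreal_ofReal
  -- pointwise bound
  have step1 : ∀ z : Cn n, F z ≤ (E * ∫⁻ w in ball z δ, F w) / c₀ := by
    intro z
    rw [ENNReal.le_div_iff_mul_le (Or.inl hc₀0) (Or.inl hc₀top)]
    exact weighted_smv n hn hα hq hδ hdiff z
  -- covering bound
  have step2 : ∑' j, ∫⁻ w in ball (zs j) δ, F w ≤ (N : ℝ≥0∞) * ∫⁻ w, F w := by
    have heq : ∀ j : ℕ, ∫⁻ w in ball (zs j) δ, F w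
        = ∫⁻ w, (ball (zs j) δ).indicator F w :=
      fun j => (lintegral_indicator measurableSet_ball F).symm
    calc ∑' j, ∫⁻ w in ball (zs j) δ, F w
        = ∑' j, ∫⁻ w, (ball (zs j) δ).indicator F w := tsum_congr heq
    _ = ∫⁻ w, ∑' j, (ball (zs j) δ).indicator F w :=
        (lintegral_tsum fun j => (hFmeas.indicator measurableSet_ball).aemeasurable).symm
    _ ≤ ∫⁻ w, (N : ℝ≥0∞) * F w := by
        apply lintegral_mono
        intro w
        set s : Set ℕ := {j | w ∈ ball (zs j) δ} with hs
        have hfin : s.Finite := (hN w).1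
        have hcard : s.ncard ≤ N := (hN w).2
        have hind : ∀ j : ℕ, (ball (zs j) δ).indicator F w
            = Set.indicator s (fun _ => F w) j := by
          intro j
          rw [Set.indicator_apply, Set.indicator_apply]
          rfl
        calc ∑' j, (ball (zs j) δ).indicator F w
            = ∑' j, Set.indicator s (fun _ => F w) j := tsum_congr hind
        _ = ∑ j ∈ hfin.toFinset, Set.indicator s (fun _ => F w) j := by
            apply tsum_eq_sum
            intro j hj
            rw [Set.Finite.mem_toFinset] at hj
            exact Set.indicator_of_notMem hj _
        _ = ∑ j ∈ hfin.toFinset, F w := by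
            apply Finset.sum_congr rfl
            intro j hj
            rw [Set.Finite.mem_toFinset] at hj
            exact Set.indicator_of_mem hj _
        _ = (hfin.toFinset.card : ℝ≥0∞) * F w := by
            rw [Finset.sum_const, nsmul_eq_mul]
        _ ≤ (N : ℝ≥0∞) * F w := by
            apply mul_le_mul_left
            have : hfin.toFinset.card = s.ncard := (Set.ncard_eq_toFinset_card s hfin).symm
            rw [this]
            exact_mod_cast hcard
    _ = (N : ℝ≥0∞) * ∫⁻ w, F w := lintegral_const_mul' _ _ (ENNReal.natCast_ne_top N)
  -- conclusion
  have hnormq : eNormLpα n q α h ^ q = ∫⁻ w, F w := by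
    rw [eNormLpα, ← ENNReal.rpow_mul, one_div_mul_cancel hq0.ne', ENNReal.rpow_one]
  have hKle : K ≤ ENNReal.ofReal (K.toReal + 1) := by
    calc K = ENNReal.ofReal K.toReal := (ENNReal.ofReal_toReal hKtop).symm
    _ ≤ ENNReal.ofReal (K.toReal + 1) :=
        ENNReal.ofReal_le_ofReal (le_add_of_nonneg_right zero_le_one)
  calc ∑' j, F (zs j)
      ≤ ∑' j, (E * ∫⁻ w in ball (zs j) δ, F w) / c₀ :=
        ENNReal.tsum_le_tsum fun j => step1 (zs j)
  _ = (E / c₀) * ∑' j, ∫⁻ w in ball (zs j) δ, F w := by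
      rw [← ENNReal.tsum_mul_left]
      apply tsum_congr
      intro j
      rw [div_eq_mul_inv, div_eq_mul_inv]
      ring
  _ ≤ (E / c₀) * ((N : ℝ≥0∞) * ∫⁻ w, F w) := mul_le_mul_right step2 _
  _ = K * ∫⁻ w, F w := by
      rw [hK, div_eq_mul_inv, div_eq_mul_inv]
      ring
  _ ≤ ENNReal.ofReal (K.toReal + 1) * ∫⁻ w, F w := mul_le_mul_left hKle _
  _ = ENNReal.ofReal (K.toReal + 1) * eNormLpα n q α h ^ q := by rw [hnormq]
end

section
/- Let n ≥ 1, α > 0 and δ > 0, let μ be a positive Borel measure on ℂⁿ, and let {z_j} be a δ-lattice in ℂⁿ such that every point of ℂⁿ lies in at most N of the balls B(z_j, δ). Then there is a constant c > 0 (depending only on n, α, δ, N) such that for every m ∈ ℕ and all complex numbers c₁,…,c_m, ∫_{ℂⁿ} (∑_{j=1}^m |c_j|² |k_{z_j}(w)|²)^{1/2} e^{−α|w|²/2} dμ(w) ≥ c·∑_{j=1}^m |c_j|·μ(B(z_j, δ)). -/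
open MeasureTheory Metric ENNReal
open scoped ENNReal NNReal ComplexConjugate

/-- **Key estimate in Proposition 2.4.** For a `δ`-lattice `{z_j}` with covering
multiplicity at most `N` at radius `δ`, there is `c > 0` such that for every positive
Borel measure `μ`, every `m` and all `c₁,…,c_m ∈ ℂ`,
`∫ (∑_{j≤m} |c_j|²|k_{z_j}(w)|²)^{1/2} e^{−α|w|²/2} dμ(w) ≥ c ∑_{j≤m} |c_j| μ(B(z_j,δ))`. -/
theorem kernel_sqsum_lower_bound (n : ℕ) (hn : 1 ≤ n) (α δ : ℝ) (hα : 0 < α) (hδ : 0 < δ)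
    (N : ℕ) (zs : ℕ → Cn n) (hlat : IsLattice n δ zs) (hN : CoverMult n δ zs N) :
    ∃ c : ℝ, 0 < c ∧
      ∀ (μ : Measure (Cn n)) (m : ℕ) (cs : Fin m → ℂ),
        ENNReal.ofReal c *
            ∑ j : Fin m, ENNReal.ofReal ‖cs j‖ * μ (ball (zs j.val) δ) ≤
          ∫⁻ w, ENNReal.ofReal
            (Real.sqrt (∑ j : Fin m, ‖cs j‖ ^ 2 * ‖fockKernel n α (zs j.val) w‖ ^ 2) *
              Real.exp (-(α / 2) * ‖w‖ ^ 2)) ∂μ := by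
  have hker : ∀ z w : Cn n, ‖fockKernel n α z w‖ * Real.exp (-(α / 2) * ‖w‖ ^ 2)
      = Real.exp (-(α / 2) * ‖w - z‖ ^ 2) := by
    intro z w
    have h1 : herm w z = conj (inner ℂ w z : ℂ) := by
      simp [herm, PiLp.inner_apply, RCLike.inner_apply, map_sum, mul_comm]
    have h2 : ‖w - z‖ ^ 2 = ‖w‖ ^ 2 - 2 * (inner ℂ w z : ℂ).re + ‖z‖ ^ 2 :=
      @norm_sub_sq ℂ _ _ _ _ w z
    rw [fockKernel, Complex.norm_exp, ← Real.exp_add]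
    congr 1
    simp [h1, Complex.sub_re, Complex.mul_re, h2, ← Complex.ofReal_pow]
    rw [show (inner ℂ z w).re = (inner ℂ w z).re from by rw [← inner_conj_symm z w, Complex.conj_re]]
    ring
  refine ⟨Real.exp (-(α / 2) * δ ^ 2) / Real.sqrt (N + 1), by positivity, ?_⟩
  intro μ m cs
  set c := Real.exp (-(α / 2) * δ ^ 2) / Real.sqrt (N + 1) with hc
  have hc0 : 0 < c := by positivity
  have key : ∀ w : Cn n,
      ∑ j : Fin m, Set.indicator (ball (zs j.val) δ)
          (fun _ => ENNReal.ofReal (c * ‖cs j‖)) w ≤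
        ENNReal.ofReal
          (Real.sqrt (∑ j : Fin m, ‖cs j‖ ^ 2 * ‖fockKernel n α (zs j.val) w‖ ^ 2) *
            Real.exp (-(α / 2) * ‖w‖ ^ 2)) := by
    intro w
    classical
    set T := Finset.univ.filter (fun j : Fin m => w ∈ ball (zs j.val) δ) with hT
    have hLHS : (∑ j : Fin m, Set.indicator (ball (zs j.val) δ)
        (fun _ => ENNReal.ofReal (c * ‖cs j‖)) w)
        = ENNReal.ofReal (∑ j ∈ T, c * ‖cs j‖) := by
      rw [ENNReal.ofReal_sum_of_nonneg (fun j _ => by positivity)]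
      simp only [Set.indicator_apply, hT, ← Finset.sum_filter]
    rw [hLHS]
    apply ENNReal.ofReal_le_ofReal
    -- card bound
    have hfin := (hN w).1
    have hcard : (T.card : ℝ) ≤ N := by
      have hsub : T.image Fin.val ⊆ hfin.toFinset := by
        intro j hj
        simp only [Finset.mem_image] at hj
        obtain ⟨i, hi, rfl⟩ := hj
        rw [Set.Finite.mem_toFinset]
        simpa [hT] using hi
      have : T.card ≤ N := by
        calc T.card = (T.image Fin.val).card :=
              (Finset.card_image_of_injective _ Fin.val_injective).symm
          _ ≤ hfin.toFinset.card := Finset.card_le_card hsub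
          _ = Set.ncard {j | w ∈ ball (zs j) δ} := by
                rw [Set.ncard_eq_toFinset_card _ hfin]
          _ ≤ N := (hN w).2
      exact_mod_cast this
    set E := Real.exp (-(α / 2) * ‖w‖ ^ 2) with hE
    set S := ∑ j : Fin m, ‖cs j‖ ^ 2 * ‖fockKernel n α (zs j.val) w‖ ^ 2 with hS
    have hE0 : 0 ≤ E := Real.exp_nonneg _
    have h1 : (∑ j ∈ T, ‖cs j‖) * Real.exp (-(α / 2) * δ ^ 2)
        ≤ (∑ j ∈ T, ‖cs j‖ * ‖fockKernel n α (zs j.val) w‖) * E := by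
      rw [Finset.sum_mul, Finset.sum_mul]
      refine Finset.sum_le_sum fun j hj => ?_
      have hjball : w ∈ ball (zs j.val) δ := by simpa [hT] using hj
      have hdist : ‖w - zs j.val‖ ^ 2 ≤ δ ^ 2 := by
        have : ‖w - zs j.val‖ < δ := by
          rw [← dist_eq_norm]; exact mem_ball.mp hjball
        exact pow_le_pow_left₀ (norm_nonneg _) this.le 2
      have hexp : Real.exp (-(α / 2) * δ ^ 2)
          ≤ ‖fockKernel n α (zs j.val) w‖ * E := by
        rw [hE, hker]
        apply Real.exp_le_exp.mpr
        nlinarith [hα.le]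
      calc ‖cs j‖ * Real.exp (-(α / 2) * δ ^ 2)
          ≤ ‖cs j‖ * (‖fockKernel n α (zs j.val) w‖ * E) :=
            mul_le_mul_of_nonneg_left hexp (norm_nonneg _)
        _ = ‖cs j‖ * ‖fockKernel n α (zs j.val) w‖ * E := by ring
    have h2 : ∑ j ∈ T, ‖cs j‖ * ‖fockKernel n α (zs j.val) w‖
        ≤ Real.sqrt S * Real.sqrt (N + 1) := by
      have := Real.sum_mul_le_sqrt_mul_sqrt T
        (fun j => ‖cs j‖ * ‖fockKernel n α (zs j.val) w‖) (fun _ => 1)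
      simp only [mul_one, one_pow, Finset.sum_const, nsmul_eq_mul] at this
      refine this.trans (mul_le_mul ?_ ?_ (Real.sqrt_nonneg _) (Real.sqrt_nonneg _))
      · apply Real.sqrt_le_sqrt
        calc ∑ j ∈ T, (‖cs j‖ * ‖fockKernel n α (zs j.val) w‖) ^ 2
            = ∑ j ∈ T, ‖cs j‖ ^ 2 * ‖fockKernel n α (zs j.val) w‖ ^ 2 := by
              refine Finset.sum_congr rfl fun j _ => by ring
          _ ≤ S := Finset.sum_le_sum_of_subset_of_nonneg (Finset.subset_univ _)
              (fun j _ _ => by positivity)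
      · exact Real.sqrt_le_sqrt (by linarith)
    have hsqN : (0 : ℝ) < Real.sqrt (N + 1) := Real.sqrt_pos.mpr (by positivity)
    calc ∑ j ∈ T, c * ‖cs j‖
        = ((∑ j ∈ T, ‖cs j‖) * Real.exp (-(α / 2) * δ ^ 2)) / Real.sqrt (N + 1) := by
          rw [← Finset.mul_sum, hc]; ring
      _ ≤ ((∑ j ∈ T, ‖cs j‖ * ‖fockKernel n α (zs j.val) w‖) * E) / Real.sqrt (N + 1) := by
          gcongr
      _ ≤ ((Real.sqrt S * Real.sqrt (N + 1)) * E) / Real.sqrt (N + 1) := by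
          gcongr
      _ = Real.sqrt S * E := by field_simp
  calc ENNReal.ofReal c * ∑ j : Fin m, ENNReal.ofReal ‖cs j‖ * μ (ball (zs j.val) δ)
      = ∑ j : Fin m, ENNReal.ofReal (c * ‖cs j‖) * μ (ball (zs j.val) δ) := by
        rw [Finset.mul_sum]
        refine Finset.sum_congr rfl fun j _ => by
          rw [ENNReal.ofReal_mul hc0.le, mul_assoc]
    _ = ∑ j : Fin m, ∫⁻ w, Set.indicator (ball (zs j.val) δ)
          (fun _ => ENNReal.ofReal (c * ‖cs j‖)) w ∂μ := by
        refine Finset.sum_congr rfl fun j _ =>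
          (lintegral_indicator_const measurableSet_ball _).symm
    _ = ∫⁻ w, ∑ j : Fin m, Set.indicator (ball (zs j.val) δ)
          (fun _ => ENNReal.ofReal (c * ‖cs j‖)) w ∂μ :=
        (lintegral_finset_sum _ fun j _ =>
          (measurable_const.indicator measurableSet_ball)).symm
    _ ≤ _ := lintegral_mono key
end

section
/- Let n ≥ 1, α > 0, 1 < p < ∞ with conjugate exponent p' = p/(p−1), and let p' ≤ s < ∞. Let Y be a Banach space and T : F^p_α → Y an s-summing operator. Then for every δ > 0 and every δ-lattice {z_j} in ℂⁿ with covering multiplicity at most N at radius δ, one has ∑_{j=1}^∞ ‖T(k_{z_j})‖_Y^s ≤ C·π_s(T)^s, where C depends only on n, p, s, α, δ, N. -/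
open MeasureTheory Metric ENNReal
open scoped ENNReal NNReal ComplexConjugate

section Aux
open Complex

lemma herm_eq_inner {n : ℕ} (w z : Cn n) : herm w z = (inner ℂ z w : ℂ) := by
  simp [herm, PiLp.inner_apply, RCLike.inner_apply, mul_comm]

lemma fock_weight_eq {n : ℕ} {α : ℝ} (z w : Cn n) :
    ‖fockKernel n α z w‖ * Real.exp (-(α/2) * ‖w‖^2) = Real.exp (-(α/2) * ‖w - z‖^2) := by
  have h2 : ‖w - z‖ ^ 2 = ‖w‖ ^ 2 - 2 * RCLike.re (inner ℂ w z : ℂ) + ‖z‖ ^ 2 :=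
    @norm_sub_sq ℂ _ _ _ _ w z
  have hsym : RCLike.re (inner ℂ w z : ℂ) = RCLike.re (inner ℂ z w : ℂ) := inner_re_symm w z
  rw [fockKernel, Complex.norm_exp, herm_eq_inner, ← Real.exp_add]
  congr 1
  have h1 : ((α : ℂ) * (inner ℂ z w : ℂ) - ((α / 2 * ‖z‖ ^ 2 : ℝ) : ℂ)).re
      = α * (inner ℂ z w : ℂ).re - α / 2 * ‖z‖ ^ 2 := by
    simp [Complex.sub_re, Complex.mul_re, ← Complex.ofReal_pow]
  rw [h1]
  have h3 : RCLike.re (inner ℂ w z : ℂ) = (inner ℂ z w : ℂ).re := hsym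
  rw [h3] at h2
  rw [h2]; ring

lemma continuous_fockKernel {n : ℕ} {α : ℝ} (z : Cn n) :
    Continuous (fockKernel n α z) := by
  apply Complex.continuous_exp.comp
  apply Continuous.sub _ continuous_const
  apply continuous_const.mul
  unfold herm
  exact continuous_finset_sum _ fun i _ =>
    ((EuclideanSpace.proj i : Cn n →L[ℂ] ℂ).continuous).mul continuous_const

end Aux


section Aux2

lemma gauss_summable {c : ℝ} (hc : 0 < c) (d : ℕ) :
    Summable (fun k : ℕ => ((k:ℝ)+1)^d * Real.exp (-c * (k:ℝ)^2)) := by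
  have hr : ‖Real.exp (-c)‖ < 1 := by
    rw [Real.norm_eq_abs, abs_of_pos (Real.exp_pos _)]
    exact Real.exp_lt_one_iff.mpr (by linarith)
  have h0 : Summable (fun k : ℕ => (k:ℝ)^d * (Real.exp (-c))^k) :=
    summable_pow_mul_geometric_of_norm_lt_one d hr
  have h1 : Summable (fun k : ℕ => ((k:ℝ)+1)^d * (Real.exp (-c))^(k+1)) := by
    have := (summable_nat_add_iff 1).mpr h0
    simpa using this
  have h2 : Summable (fun k : ℕ => (((k:ℝ)+1)^d * (Real.exp (-c))^(k+1)) * (Real.exp (-c))⁻¹) :=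
    h1.mul_right _
  apply Summable.of_nonneg_of_le (fun k => by positivity) _ h2
  intro k
  have hk : Real.exp (-c * (k:ℝ)^2) ≤ (Real.exp (-c))^k := by
    rw [← Real.exp_nat_mul]
    apply Real.exp_le_exp.mpr
    have : (k:ℝ) ≤ (k:ℝ)^2 := by
      rcases Nat.eq_zero_or_pos k with h | h
      · simp [h]
      · nlinarith [show (1:ℝ) ≤ (k:ℝ) from by exact_mod_cast h]
    nlinarith
  calc ((k:ℝ)+1)^d * Real.exp (-c * (k:ℝ)^2) ≤ ((k:ℝ)+1)^d * (Real.exp (-c))^k := by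
        apply mul_le_mul_of_nonneg_left hk (by positivity)
    _ = (((k:ℝ)+1)^d * (Real.exp (-c))^(k+1)) * (Real.exp (-c))⁻¹ := by
        rw [pow_succ]; field_simp

lemma gauss_lintegral {n : ℕ} {c : ℝ} (hc : 0 < c) :
    ∃ J : ℝ≥0∞, J < ⊤ ∧ ∀ w : Cn n,
      (∫⁻ u, ENNReal.ofReal (Real.exp (-c * ‖u - w‖^2))) ≤ J := by
  set d := Module.finrank ℝ (Cn n) with hd
  set V1 := (volume : Measure (Cn n)) (ball 0 1) with hV1
  refine ⟨∑' k : ℕ, ENNReal.ofReal (((k:ℝ)+1)^d * Real.exp (-c * (k:ℝ)^2)) * V1, ?_, ?_⟩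
  · rw [ENNReal.tsum_mul_right,
      ← ENNReal.ofReal_tsum_of_nonneg (fun k => by positivity) (gauss_summable hc d)]
    exact ENNReal.mul_lt_top ofReal_lt_top measure_ball_lt_top
  · intro w
    have hcover : (Set.univ : Set (Cn n)) = ⋃ k : ℕ, (ball w ((k:ℝ)+1) \ ball w (k:ℝ)) := by
      ext u
      simp only [Set.mem_univ, Set.mem_iUnion, true_iff, Set.mem_diff, mem_ball]
      exact ⟨Nat.floor (dist u w), Nat.lt_floor_add_one _,
        fun h => absurd h (not_lt.mpr (Nat.floor_le dist_nonneg))⟩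
    calc ∫⁻ u, ENNReal.ofReal (Real.exp (-c * ‖u - w‖^2))
        = ∫⁻ u in ⋃ k : ℕ, (ball w ((k:ℝ)+1) \ ball w (k:ℝ)),
            ENNReal.ofReal (Real.exp (-c * ‖u - w‖^2)) := by
          rw [← hcover, setLIntegral_univ]
      _ ≤ ∑' k : ℕ, ∫⁻ u in (ball w ((k:ℝ)+1) \ ball w (k:ℝ)),
            ENNReal.ofReal (Real.exp (-c * ‖u - w‖^2)) := lintegral_iUnion_le _ _
      _ ≤ ∑' k : ℕ, ENNReal.ofReal (((k:ℝ)+1)^d * Real.exp (-c * (k:ℝ)^2)) * V1 := by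
          apply ENNReal.tsum_le_tsum
          intro k
          have hle : ∫⁻ u in (ball w ((k:ℝ)+1) \ ball w (k:ℝ)),
              ENNReal.ofReal (Real.exp (-c * ‖u - w‖^2))
              ≤ ∫⁻ _ in (ball w ((k:ℝ)+1) \ ball w (k:ℝ)),
                  ENNReal.ofReal (Real.exp (-c * (k:ℝ)^2)) := by
            apply setLIntegral_mono measurable_const
            intro u hu
            apply ENNReal.ofReal_le_ofReal
            apply Real.exp_le_exp.mpr
            have h1 : (k:ℝ) ≤ ‖u - w‖ := by
              have := hu.2
              rw [mem_ball, dist_eq_norm] at this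
              push_neg at this
              exact this
            have h0 : (0:ℝ) ≤ (k:ℝ) := Nat.cast_nonneg k
            have h2 : (k:ℝ)^2 ≤ ‖u - w‖^2 := by nlinarith
            nlinarith
          refine hle.trans ?_
          rw [setLIntegral_const]
          have hball : volume (ball w ((k:ℝ)+1) \ ball w (k:ℝ)) ≤ volume (ball w ((k:ℝ)+1)) :=
            measure_mono Set.diff_subset
          have hvol : volume (ball w ((k:ℝ)+1)) = ENNReal.ofReal (((k:ℝ)+1)^d) * V1 := by
            rw [Measure.addHaar_ball_of_pos _ w (by positivity)]
          calc ENNReal.ofReal (Real.exp (-c * (k:ℝ)^2)) * volume (ball w ((k:ℝ)+1) \ ball w (k:ℝ))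
              ≤ ENNReal.ofReal (Real.exp (-c * (k:ℝ)^2)) * (ENNReal.ofReal (((k:ℝ)+1)^d) * V1) := by
                rw [← hvol]; exact mul_le_mul_right hball _
            _ = ENNReal.ofReal (((k:ℝ)+1)^d * Real.exp (-c * (k:ℝ)^2)) * V1 := by
                rw [← mul_assoc, ← ENNReal.ofReal_mul (Real.exp_pos _).le, mul_comm (Real.exp _)]

lemma schur_bound {n : ℕ} {r c : ℝ} (hr : 0 < r) (hc : 0 < c) {zs : ℕ → Cn n}
    (hdis : Pairwise fun i j => Disjoint (ball (zs i) r) (ball (zs j) r)) :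
    ∃ M : ℝ, 0 ≤ M ∧ ∀ (w : Cn n) (F : Finset ℕ),
      ∑ j ∈ F, Real.exp (-c * ‖w - zs j‖^2) ≤ M := by
  obtain ⟨J, hJtop, hJ⟩ := gauss_lintegral (n := n) (half_pos hc)
  set V := (volume : Measure (Cn n)) (ball (0 : Cn n) r) with hV
  have hV0 : V ≠ 0 := (measure_ball_pos _ _ hr).ne'
  have hVtop : V ≠ ⊤ := measure_ball_lt_top.ne
  set K : ℝ≥0∞ := ENNReal.ofReal (Real.exp (c * r^2)) with hK
  refine ⟨(K * J / V).toReal, ENNReal.toReal_nonneg, ?_⟩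
  intro w F
  have key : ∀ j : ℕ, ENNReal.ofReal (Real.exp (-c * ‖w - zs j‖^2)) * V
      ≤ K * ∫⁻ u in ball (zs j) r, ENNReal.ofReal (Real.exp (-(c/2) * ‖u - w‖^2)) := by
    intro j
    have hlow : ENNReal.ofReal (Real.exp (-c * r^2 - c * ‖w - zs j‖^2)) * V
        ≤ ∫⁻ u in ball (zs j) r, ENNReal.ofReal (Real.exp (-(c/2) * ‖u - w‖^2)) := by
      have : ∫⁻ _ in ball (zs j) r, ENNReal.ofReal (Real.exp (-c * r^2 - c * ‖w - zs j‖^2))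
          ≤ ∫⁻ u in ball (zs j) r, ENNReal.ofReal (Real.exp (-(c/2) * ‖u - w‖^2)) := by
        apply setLIntegral_mono
        · exact (Continuous.measurable (by continuity)).ennreal_ofReal
        · intro u hu
          apply ENNReal.ofReal_le_ofReal
          apply Real.exp_le_exp.mpr
          rw [mem_ball, dist_eq_norm] at hu
          have htri : ‖u - w‖ ≤ ‖u - zs j‖ + ‖w - zs j‖ := by
            have := norm_sub_le_norm_sub_add_norm_sub u w (zs j)
            calc ‖u - w‖ ≤ ‖u - zs j‖ + ‖zs j - w‖ := norm_sub_le_norm_sub_add_norm_sub _ _ _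
              _ = ‖u - zs j‖ + ‖w - zs j‖ := by rw [norm_sub_rev (zs j) w]
          have h2 : ‖u - w‖^2 ≤ 2 * r^2 + 2 * ‖w - zs j‖^2 := by
            have h3 : ‖u - w‖ ≤ r + ‖w - zs j‖ := by linarith
            have h4 := mul_self_le_mul_self (norm_nonneg (u - w)) h3
            nlinarith [sq_nonneg (r - ‖w - zs j‖)]
          nlinarith
      calc ENNReal.ofReal (Real.exp (-c * r^2 - c * ‖w - zs j‖^2)) * V
          = ∫⁻ _ in ball (zs j) r, ENNReal.ofReal (Real.exp (-c * r^2 - c * ‖w - zs j‖^2)) := by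
            rw [setLIntegral_const, Measure.addHaar_ball_center]
        _ ≤ _ := this
    calc ENNReal.ofReal (Real.exp (-c * ‖w - zs j‖^2)) * V
        = K * (ENNReal.ofReal (Real.exp (-c * r^2 - c * ‖w - zs j‖^2)) * V) := by
          rw [hK, ← mul_assoc, ← ENNReal.ofReal_mul (Real.exp_pos _).le, ← Real.exp_add]
          ring_nf
      _ ≤ K * ∫⁻ u in ball (zs j) r, ENNReal.ofReal (Real.exp (-(c/2) * ‖u - w‖^2)) :=
          mul_le_mul_right hlow _
  have hsum : (∑ j ∈ F, ENNReal.ofReal (Real.exp (-c * ‖w - zs j‖^2))) * V ≤ K * J := by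
    rw [Finset.sum_mul]
    calc ∑ j ∈ F, ENNReal.ofReal (Real.exp (-c * ‖w - zs j‖^2)) * V
        ≤ ∑ j ∈ F, K * ∫⁻ u in ball (zs j) r, ENNReal.ofReal (Real.exp (-(c/2) * ‖u - w‖^2)) :=
          Finset.sum_le_sum fun j _ => key j
      _ = K * ∑ j ∈ F, ∫⁻ u in ball (zs j) r, ENNReal.ofReal (Real.exp (-(c/2) * ‖u - w‖^2)) := by
          rw [Finset.mul_sum]
      _ = K * ∫⁻ u in ⋃ j ∈ F, ball (zs j) r, ENNReal.ofReal (Real.exp (-(c/2) * ‖u - w‖^2)) := by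
          rw [lintegral_biUnion_finset ?_ (fun b _ => measurableSet_ball)]
          intro i _ j _ hij
          exact hdis hij
      _ ≤ K * ∫⁻ u, ENNReal.ofReal (Real.exp (-(c/2) * ‖u - w‖^2)) :=
          mul_le_mul_right (setLIntegral_le_lintegral _ _) _
      _ ≤ K * J := mul_le_mul_right (hJ w) _
  have hle : ENNReal.ofReal (∑ j ∈ F, Real.exp (-c * ‖w - zs j‖^2)) ≤ K * J / V := by
    rw [ENNReal.le_div_iff_mul_le (Or.inl hV0) (Or.inl hVtop),
      ENNReal.ofReal_sum_of_nonneg (fun j _ => (Real.exp_pos _).le)]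
    exact hsum
  have := ENNReal.toReal_mono (by
      exact (ENNReal.div_lt_top (ENNReal.mul_lt_top ofReal_lt_top hJtop).ne hV0).ne) hle
  rwa [ENNReal.toReal_ofReal (Finset.sum_nonneg fun j _ => (Real.exp_pos _).le)] at this


lemma jensen_finset {ι : Type*} (F : Finset ι) (cf G : ι → ℝ) (hc : ∀ j ∈ F, 0 ≤ cf j)
    (hG : ∀ j ∈ F, 0 < G j) {p M : ℝ} (hp : 1 ≤ p) (hM : ∑ j ∈ F, G j ≤ M) :
    (∑ j ∈ F, cf j * G j) ^ p ≤ M ^ (p-1) * ∑ j ∈ F, cf j ^ p * G j := by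
  have hp0 : (0:ℝ) < p := by linarith
  rcases F.eq_empty_or_nonempty with rfl | hne
  · simp [Real.zero_rpow hp0.ne']
  · set S := ∑ j ∈ F, G j with hS
    have hS0 : 0 < S := Finset.sum_pos hG hne
    have hw : ∑ j ∈ F, G j / S = 1 := by
      rw [← Finset.sum_div, ← hS, div_self hS0.ne']
    have key := Real.rpow_arith_mean_le_arith_mean_rpow F (fun j => G j / S) cf
      (fun j hj => div_nonneg (hG j hj).le hS0.le) hw (fun j hj => hc j hj) hp
    have hsum1 : ∑ j ∈ F, G j / S * cf j = (∑ j ∈ F, cf j * G j) / S := by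
      rw [eq_div_iff hS0.ne', Finset.sum_mul]
      exact Finset.sum_congr rfl fun j _ => by field_simp
    have hsum2 : ∑ j ∈ F, G j / S * cf j ^ p = (∑ j ∈ F, cf j ^ p * G j) / S := by
      rw [eq_div_iff hS0.ne', Finset.sum_mul]
      exact Finset.sum_congr rfl fun j _ => by field_simp
    simp only [hsum1, hsum2] at key
    have hT0 : 0 ≤ ∑ j ∈ F, cf j * G j :=
      Finset.sum_nonneg fun j hj => mul_nonneg (hc j hj) (hG j hj).le
    have hdiv : ((∑ j ∈ F, cf j * G j) / S) ^ p
        = (∑ j ∈ F, cf j * G j) ^ p / S ^ p := Real.div_rpow hT0 hS0.le _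
    rw [hdiv, div_le_div_iff₀ (Real.rpow_pos_of_pos hS0 p) hS0] at key
    have key2 : (∑ j ∈ F, cf j * G j) ^ p ≤ S ^ (p-1) * ∑ j ∈ F, cf j ^ p * G j := by
      have hSp : S ^ (p-1) = S ^ p / S := by
        rw [Real.rpow_sub hS0, Real.rpow_one]
      rw [hSp, div_mul_eq_mul_div, le_div_iff₀ hS0]
      exact key.trans_eq (by ring)
    refine key2.trans ?_
    apply mul_le_mul_of_nonneg_right _ (Finset.sum_nonneg fun j hj =>
      mul_nonneg (Real.rpow_nonneg (hc j hj) p) (hG j hj).le)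
    exact Real.rpow_le_rpow hS0.le hM (by linarith)

lemma dual_finite {m : ℕ} (h : Fin m → ℂ) {p s A : ℝ} (hp1 : 1 < p) (hA : 0 ≤ A)
    (hs : p/(p-1) ≤ s)
    (H : ∀ a : Fin m → ℂ, ‖∑ j, a j * h j‖ ≤ A * (∑ j, ‖a j‖ ^ p) ^ (1/p)) :
    ∑ j, ‖h j‖ ^ s ≤ A ^ s := by
  set q := p/(p-1) with hqdef
  have hp0 : (0:ℝ) < p := by linarith
  have hpm : (0:ℝ) < p - 1 := by linarith
  have hq1 : 1 < q := (one_lt_div hpm).mpr (by linarith)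
  have hq0 : (0:ℝ) < q := by linarith
  have hs1 : (1:ℝ) < s := lt_of_lt_of_le hq1 hs
  set t : Fin m → ℝ := fun j => ‖h j‖ with ht
  set a : Fin m → ℂ := fun j => conj (h j) * ((t j ^ (q-2) : ℝ) : ℂ) with ha
  set S := ∑ j, t j ^ q with hSdef
  have htn : ∀ j, 0 ≤ t j := fun j => norm_nonneg _
  have f1 : ∀ j, a j * h j = ((t j ^ q : ℝ) : ℂ) := by
    intro j
    rcases eq_or_ne (h j) 0 with hj | hj
    · simp [ha, hj, ht, Real.zero_rpow hq0.ne']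
    · have htj : 0 < t j := norm_pos_iff.mpr hj
      have hcm : conj (h j) * h j = ((t j ^ (2:ℕ) : ℝ) : ℂ) := by
        rw [mul_comm, Complex.mul_conj]
        norm_cast
        rw [Complex.normSq_eq_norm_sq]
      calc a j * h j = (conj (h j) * h j) * ((t j ^ (q-2) : ℝ) : ℂ) := by rw [ha]; ring
        _ = ((t j ^ (2:ℕ) * t j ^ (q-2) : ℝ) : ℂ) := by rw [hcm]; push_cast; ring
        _ = ((t j ^ q : ℝ) : ℂ) := by
            congr 1
            rw [← Real.rpow_natCast (t j) 2, ← Real.rpow_add htj]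
            norm_num
  have f2 : ∀ j, ‖a j‖ = t j ^ (q-1) := by
    intro j
    rcases eq_or_ne (h j) 0 with hj | hj
    · simp [ha, hj, ht, Real.zero_rpow (by intro hq2; linarith : q - 1 ≠ 0)]
    · have htj : 0 < t j := norm_pos_iff.mpr hj
      rw [ha, norm_mul, RCLike.norm_conj, Complex.norm_real, Real.norm_eq_abs,
        abs_of_nonneg (Real.rpow_nonneg (htn j) _)]
      show t j * t j ^ (q-2) = t j ^ (q-1)
      nth_rewrite 1 [← Real.rpow_one (t j)]
      rw [← Real.rpow_add htj]
      congr 1; ring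
  have f3 : ∀ j, ‖a j‖ ^ p = t j ^ q := by
    intro j
    rw [f2, ← Real.rpow_mul (htn j)]
    congr 1
    rw [hqdef]; field_simp; ring
  have hS0 : 0 ≤ S := Finset.sum_nonneg fun j _ => Real.rpow_nonneg (htn j) q
  have hsum : ∑ j, a j * h j = ((S : ℝ) : ℂ) := by
    rw [hSdef, Complex.ofReal_sum]
    exact Finset.sum_congr rfl fun j _ => f1 j
  have key : S ≤ A * S ^ (1/p) := by
    have hHa := H a
    rw [hsum, Complex.norm_real, Real.norm_eq_abs, abs_of_nonneg hS0] at hHa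
    have he : ∑ j, ‖a j‖ ^ p = S := by
      rw [hSdef]; exact Finset.sum_congr rfl fun j _ => f3 j
    rwa [he] at hHa
  rcases eq_or_lt_of_le hS0 with hS | hS
  · have hz : ∀ j, t j = 0 := by
      intro j
      have h0 := (Finset.sum_eq_zero_iff_of_nonneg
        (fun j _ => Real.rpow_nonneg (htn j) q)).mp hS.symm j (Finset.mem_univ j)
      by_contra hne
      exact absurd h0 (ne_of_gt (Real.rpow_pos_of_pos
        (lt_of_le_of_ne (htn j) (Ne.symm hne)) q))
    calc ∑ j, t j ^ s = 0 := Finset.sum_eq_zero fun j _ => by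
          rw [hz j, Real.zero_rpow (by linarith : s ≠ 0)]
      _ ≤ A ^ s := Real.rpow_nonneg hA s
  · have hq' : S ^ (1/q) ≤ A := by
      have h1 : S / S ^ (1/p) ≤ A := by
        rw [div_le_iff₀ (Real.rpow_pos_of_pos hS _)]
        exact key
      have h2 : S / S ^ (1/p) = S ^ (1 - 1/p) := by
        rw [Real.rpow_sub hS, Real.rpow_one]
      have h3 : (1:ℝ) - 1/p = 1/q := by rw [hqdef]; field_simp
      rw [h2, h3] at h1
      exact h1
    have tA : ∀ j, t j ≤ A := by
      intro j
      have h4 : t j ^ q ≤ S := Finset.single_le_sum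
        (fun j _ => Real.rpow_nonneg (htn j) q) (Finset.mem_univ j)
      have h5 : (t j ^ q) ^ (1/q) ≤ S ^ (1/q) :=
        Real.rpow_le_rpow (Real.rpow_nonneg (htn j) q) h4 (by positivity)
      rw [← Real.rpow_mul (htn j), mul_one_div, div_self hq0.ne', Real.rpow_one] at h5
      exact h5.trans hq'
    have SA : S ≤ A ^ q := by
      calc S = (S ^ (1/q)) ^ q := by
            rw [← Real.rpow_mul hS.le, one_div_mul_cancel hq0.ne', Real.rpow_one]
        _ ≤ A ^ q := Real.rpow_le_rpow (Real.rpow_nonneg hS.le _) hq' hq0.le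
    rcases eq_or_lt_of_le hA with hA0 | hA0
    · have hz : ∀ j, t j = 0 := fun j => le_antisymm (hA0 ▸ tA j) (htn j)
      calc ∑ j, t j ^ s = 0 := Finset.sum_eq_zero fun j _ => by
            rw [hz j, Real.zero_rpow (by linarith : s ≠ 0)]
        _ ≤ A ^ s := Real.rpow_nonneg hA s
    · calc ∑ j, t j ^ s = ∑ j, t j ^ q * t j ^ (s - q) := by
            apply Finset.sum_congr rfl; intro j _
            rcases eq_or_lt_of_le (htn j) with h0 | h0
            · rw [← h0, Real.zero_rpow (by linarith : s ≠ 0), Real.zero_rpow hq0.ne',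
                zero_mul]
            · rw [← Real.rpow_add h0]; congr 1; ring
        _ ≤ ∑ j, t j ^ q * A ^ (s - q) := Finset.sum_le_sum fun j _ =>
            mul_le_mul_of_nonneg_left
              (Real.rpow_le_rpow (htn j) (tA j) (by linarith)) (Real.rpow_nonneg (htn j) q)
        _ = A ^ (s - q) * S := by
            rw [hSdef, Finset.mul_sum]
            exact Finset.sum_congr rfl fun j _ => by ring
        _ ≤ A ^ (s - q) * A ^ q := mul_le_mul_of_nonneg_left SA (Real.rpow_nonneg hA _)
        _ = A ^ s := by rw [← Real.rpow_add hA0]; congr 1; ring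

end Aux2

section Combo

lemma combo_lintegral_bound {n : ℕ} {α p : ℝ} (hα : 0 < α) (hp1 : 1 < p)
    {zs : ℕ → Cn n} {M : ℝ} (hM0 : 0 ≤ M)
    (hM : ∀ (w : Cn n) (F : Finset ℕ), ∑ j ∈ F, Real.exp (-(α/2) * ‖w - zs j‖^2) ≤ M)
    {J : ℝ≥0∞} (hJtop : J < ⊤)
    (hJ : ∀ w : Cn n, (∫⁻ u, ENNReal.ofReal (Real.exp (-(α/2) * ‖u - w‖^2))) ≤ J)
    (m : ℕ) (a : Fin m → ℂ) :
    ∫⁻ w, (‖∑ j : Fin m, a j * fockKernel n α (zs (j:ℕ)) w‖₊ : ℝ≥0∞) ^ p ∂(wMeasure n p α)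
      ≤ ENNReal.ofReal (M ^ (p-1)) * (ENNReal.ofReal (∑ j : Fin m, ‖a j‖ ^ p) * J) := by
  have hp0 : (0:ℝ) < p := by linarith
  set FF : Cn n → ℂ := fun w => ∑ j : Fin m, a j * fockKernel n α (zs (j:ℕ)) w with hFF
  have hFc : Continuous FF :=
    continuous_finset_sum _ fun j _ => continuous_const.mul (continuous_fockKernel _)
  have hρm : Measurable fun w : Cn n => ENNReal.ofReal (Real.exp (-(α * p / 2) * ‖w‖^2)) := by
    exact (ENNReal.continuous_ofReal.comp (Real.continuous_exp.comp
      (continuous_const.mul (continuous_norm.pow 2)))).measurable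
  have hFm : Measurable fun w => (‖FF w‖₊ : ℝ≥0∞) ^ p := by
    apply Measurable.pow_const
    exact hFc.measurable.nnnorm.coe_nnreal_ennreal
  rw [wMeasure, lintegral_withDensity_eq_lintegral_mul _ hρm hFm]
  have hpt : ∀ w : Cn n,
      ENNReal.ofReal (Real.exp (-(α * p / 2) * ‖w‖^2)) * (‖FF w‖₊ : ℝ≥0∞) ^ p
      ≤ ENNReal.ofReal (M ^ (p-1) *
          ∑ j : Fin m, ‖a j‖ ^ p * Real.exp (-(α/2) * ‖w - zs (j:ℕ)‖^2)) := by
    intro w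
    have e1 : (‖FF w‖₊ : ℝ≥0∞) ^ p = ENNReal.ofReal (‖FF w‖ ^ p) := by
      rw [← enorm_eq_nnnorm, ← ofReal_norm, ENNReal.ofReal_rpow_of_nonneg (norm_nonneg _) hp0.le]
    rw [e1, ← ENNReal.ofReal_mul (Real.exp_pos _).le]
    apply ENNReal.ofReal_le_ofReal
    have e2 : Real.exp (-(α * p / 2) * ‖w‖^2) * ‖FF w‖ ^ p
        = (‖FF w‖ * Real.exp (-(α/2) * ‖w‖^2)) ^ p := by
      rw [Real.mul_rpow (norm_nonneg _) (Real.exp_pos _).le, ← Real.exp_mul]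
      ring_nf
    rw [e2]
    have hBB : ‖FF w‖ * Real.exp (-(α/2) * ‖w‖^2)
        ≤ ∑ j : Fin m, ‖a j‖ * Real.exp (-(α/2) * ‖w - zs (j:ℕ)‖^2) := by
      have h1 : ‖FF w‖ ≤ ∑ j : Fin m, ‖a j‖ * ‖fockKernel n α (zs (j:ℕ)) w‖ :=
        (norm_sum_le _ _).trans (le_of_eq (Finset.sum_congr rfl fun j _ => norm_mul _ _))
      calc ‖FF w‖ * Real.exp (-(α/2) * ‖w‖^2)
          ≤ (∑ j : Fin m, ‖a j‖ * ‖fockKernel n α (zs (j:ℕ)) w‖) *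
              Real.exp (-(α/2) * ‖w‖^2) :=
            mul_le_mul_of_nonneg_right h1 (Real.exp_pos _).le
        _ = ∑ j : Fin m, ‖a j‖ * (‖fockKernel n α (zs (j:ℕ)) w‖ *
              Real.exp (-(α/2) * ‖w‖^2)) := by
            rw [Finset.sum_mul]; exact Finset.sum_congr rfl fun j _ => by ring
        _ = ∑ j : Fin m, ‖a j‖ * Real.exp (-(α/2) * ‖w - zs (j:ℕ)‖^2) :=
            Finset.sum_congr rfl fun j _ => by rw [fock_weight_eq]
    have hjen := jensen_finset (M := M) (Finset.univ : Finset (Fin m)) (fun j => ‖a j‖)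
      (fun j => Real.exp (-(α/2) * ‖w - zs (j:ℕ)‖^2))
      (fun j _ => norm_nonneg _) (fun j _ => Real.exp_pos _) hp1.le
      (by
        rw [show ∑ j : Fin m, Real.exp (-(α/2) * ‖w - zs (j:ℕ)‖^2)
            = ∑ j ∈ Finset.range m, Real.exp (-(α/2) * ‖w - zs j‖^2) from
          Fin.sum_univ_eq_sum_range (fun j => Real.exp (-(α/2) * ‖w - zs j‖^2)) m]
        exact hM w (Finset.range m))
    calc (‖FF w‖ * Real.exp (-(α/2) * ‖w‖^2)) ^ p
        ≤ (∑ j : Fin m, ‖a j‖ * Real.exp (-(α/2) * ‖w - zs (j:ℕ)‖^2)) ^ p :=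
          Real.rpow_le_rpow (by positivity) hBB hp0.le
      _ ≤ M ^ (p-1) * ∑ j : Fin m, ‖a j‖ ^ p * Real.exp (-(α/2) * ‖w - zs (j:ℕ)‖^2) := hjen
  calc ∫⁻ w, ENNReal.ofReal (Real.exp (-(α * p / 2) * ‖w‖^2)) * (‖FF w‖₊ : ℝ≥0∞) ^ p
      ≤ ∫⁻ w, ENNReal.ofReal (M ^ (p-1) *
          ∑ j : Fin m, ‖a j‖ ^ p * Real.exp (-(α/2) * ‖w - zs (j:ℕ)‖^2)) :=
        lintegral_mono hpt
    _ = ENNReal.ofReal (M ^ (p-1)) *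
        ∫⁻ w, ENNReal.ofReal (∑ j : Fin m, ‖a j‖ ^ p *
          Real.exp (-(α/2) * ‖w - zs (j:ℕ)‖^2)) := by
        rw [← lintegral_const_mul']
        · congr 1
          funext w
          rw [← ENNReal.ofReal_mul (by positivity)]
        · exact ofReal_ne_top
    _ = ENNReal.ofReal (M ^ (p-1)) *
        ∑ j : Fin m, ∫⁻ w, ENNReal.ofReal (‖a j‖ ^ p *
          Real.exp (-(α/2) * ‖w - zs (j:ℕ)‖^2)) := by
        congr 1
        rw [← lintegral_finset_sum]
        · congr 1
          funext w
          rw [ENNReal.ofReal_sum_of_nonneg fun j _ => by positivity]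
        · intro j _
          exact (ENNReal.continuous_ofReal.comp (continuous_const.mul
            (Real.continuous_exp.comp (continuous_const.mul
              (((continuous_id.sub continuous_const).norm.pow 2)))))).measurable
    _ ≤ ENNReal.ofReal (M ^ (p-1)) *
        ∑ j : Fin m, ENNReal.ofReal (‖a j‖ ^ p) * J := by
        apply mul_le_mul_right
        apply Finset.sum_le_sum
        intro j _
        calc ∫⁻ w, ENNReal.ofReal (‖a j‖ ^ p * Real.exp (-(α/2) * ‖w - zs (j:ℕ)‖^2))
            = ENNReal.ofReal (‖a j‖ ^ p) *
              ∫⁻ w, ENNReal.ofReal (Real.exp (-(α/2) * ‖w - zs (j:ℕ)‖^2)) := by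
              rw [← lintegral_const_mul' _ _ ofReal_ne_top]
              congr 1
              funext w
              rw [← ENNReal.ofReal_mul (by positivity)]
          _ ≤ ENNReal.ofReal (‖a j‖ ^ p) * J := mul_le_mul_right (hJ (zs (j:ℕ))) _
    _ = ENNReal.ofReal (M ^ (p-1)) * (ENNReal.ofReal (∑ j : Fin m, ‖a j‖ ^ p) * J) := by
        rw [ENNReal.ofReal_sum_of_nonneg fun j _ => by positivity, Finset.sum_mul]

end Combo

section Final

lemma Lp_coeFn_finset_sum {X : Type*} [MeasurableSpace X] {μ : Measure X} {q : ℝ≥0∞}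
    {ι : Type*} (s : Finset ι) (f : ι → Lp ℂ q μ) :
    ((∑ i ∈ s, f i : Lp ℂ q μ) : X → ℂ) =ᵐ[μ] fun x => ∑ i ∈ s, (f i : X → ℂ) x := by
  induction s using Finset.cons_induction with
  | empty => simp only [Finset.sum_empty]; exact Lp.coeFn_zero ℂ q μ
  | cons i s his ih =>
    rw [Finset.sum_cons]
    filter_upwards [Lp.coeFn_add (f i) (∑ j ∈ s, f j), ih] with x h1 h2
    rw [Finset.sum_cons, h1, Pi.add_apply, h2]

lemma combo_norm_bound {n : ℕ} {α p : ℝ} (hα : 0 < α) (hp1 : 1 < p) [Fact ((1:ℝ) ≤ p)]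
    {zs : ℕ → Cn n} {M : ℝ} (hM0 : 0 ≤ M)
    (hM : ∀ (w : Cn n) (F : Finset ℕ), ∑ j ∈ F, Real.exp (-(α/2) * ‖w - zs j‖^2) ≤ M)
    {J : ℝ≥0∞} (hJtop : J < ⊤)
    (hJ : ∀ w : Cn n, (∫⁻ u, ENNReal.ofReal (Real.exp (-(α/2) * ‖u - w‖^2))) ≤ J)
    (m : ℕ) (a : Fin m → ℂ) (f : Lp ℂ (ENNReal.ofReal p) (wMeasure n p α))
    (hf : (f : Cn n → ℂ) =ᵐ[wMeasure n p α]
      fun w => ∑ j : Fin m, a j * fockKernel n α (zs (j:ℕ)) w) :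
    ‖f‖ ≤ (M ^ (p-1) * J.toReal) ^ (1/p) * (∑ j : Fin m, ‖a j‖ ^ p) ^ (1/p) := by
  have hp0 : (0:ℝ) < p := lt_trans one_pos hp1
  have hq0 : (ENNReal.ofReal p) ≠ 0 := by
    simp only [ne_eq, ENNReal.ofReal_eq_zero, not_le]; linarith
  have hSa0 : 0 ≤ ∑ j : Fin m, ‖a j‖ ^ p :=
    Finset.sum_nonneg fun j _ => Real.rpow_nonneg (norm_nonneg _) p
  rw [Lp.norm_def, eLpNorm_congr_ae hf,
    eLpNorm_eq_lintegral_rpow_enorm_toReal hq0 ENNReal.ofReal_ne_top,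
    ENNReal.toReal_ofReal hp0.le]
  set B := ENNReal.ofReal (M^(p-1)) * (ENNReal.ofReal (∑ j : Fin m, ‖a j‖ ^ p) * J) with hB
  have hle := combo_lintegral_bound hα hp1 hM0 hM hJtop hJ m a
  have hBt : B ≠ ⊤ :=
    ENNReal.mul_ne_top ENNReal.ofReal_ne_top
      (ENNReal.mul_ne_top ENNReal.ofReal_ne_top hJtop.ne)
  have h1 : (∫⁻ w, (‖∑ j : Fin m, a j * fockKernel n α (zs (j:ℕ)) w‖₊ : ℝ≥0∞) ^ p
      ∂(wMeasure n p α)) ^ (1/p) ≤ B ^ (1/p) :=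
    ENNReal.rpow_le_rpow hle (by positivity)
  have h2 := ENNReal.toReal_mono
    (ENNReal.rpow_lt_top_of_nonneg (by positivity) hBt).ne h1
  refine h2.trans ?_
  rw [← ENNReal.toReal_rpow, hB, ENNReal.toReal_mul, ENNReal.toReal_mul,
    ENNReal.toReal_ofReal (by positivity), ENNReal.toReal_ofReal hSa0]
  have he : M^(p-1) * ((∑ j : Fin m, ‖a j‖ ^ p) * J.toReal)
      = (M^(p-1) * J.toReal) * (∑ j : Fin m, ‖a j‖ ^ p) := by ring
  rw [he, Real.mul_rpow (by positivity) hSa0]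

end Final

/-- **Case 1/2 estimate in Theorem 3.3.** Let `1 < p < ∞`, `p' = p/(p−1) ≤ s < ∞`, and let
`{z_j}` be a `δ`-lattice with covering multiplicity at most `N` at radius `δ`. Then there
is `C > 0` (depending only on `n, p, s, α, δ, N`) such that every `s`-summing operator
`T : F^p_α → Y` into a Banach space `Y` satisfies `∑_j ‖T(k_{z_j})‖^s ≤ C π_s(T)^s`. -/
theorem summing_kernel_sum_bound (n : ℕ) (hn : 1 ≤ n) (α p s : ℝ) (hα : 0 < α)
    [hp : Fact ((1 : ℝ) ≤ p)] (hp1 : 1 < p) (hs : p / (p - 1) ≤ s) (δ : ℝ) (hδ : 0 < δ)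
    (N : ℕ) (zs : ℕ → Cn n) (hlat : IsLattice n δ zs) (hN : CoverMult n δ zs N) :
    ∃ C : ℝ, 0 < C ∧
      ∀ (Y : Type u) [NormedAddCommGroup Y] [NormedSpace ℂ Y] [CompleteSpace Y]
        (T : FockSpace n p α →L[ℂ] Y) (C₀ : ℝ), 0 ≤ C₀ → IsSummingWith s s T C₀ →
        ∀ g : ℕ → FockSpace n p α,
          (∀ j, ((g j : Lp ℂ (ENNReal.ofReal p) (wMeasure n p α)) : Cn n → ℂ)
              =ᵐ[wMeasure n p α] fockKernel n α (zs j)) →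
          ∑' j, ENNReal.ofReal (‖T (g j)‖ ^ s) ≤ ENNReal.ofReal (C * C₀ ^ s) := by
  obtain ⟨-, b, hb, hdis⟩ := hlat
  obtain ⟨M, hM0, hM⟩ := schur_bound (mul_pos hb hδ) (half_pos hα) hdis
  obtain ⟨J, hJtop, hJ⟩ := gauss_lintegral (n := n) (half_pos hα)
  set A0 : ℝ := (M ^ (p-1) * J.toReal) ^ (1/p) with hA0
  set A : ℝ := max A0 1 with hA
  have hA1 : (0:ℝ) < A := lt_of_lt_of_le one_pos (le_max_right _ _)
  have hpm : (0:ℝ) < p - 1 := by linarith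
  have hs1 : (1:ℝ) < s := lt_of_lt_of_le ((one_lt_div hpm).mpr (by linarith)) hs
  have hs0 : (0:ℝ) < s := by linarith
  refine ⟨A ^ s, Real.rpow_pos_of_pos hA1 s, ?_⟩
  intro Y _ _ _ T C₀ hC₀ hsumm g hg
  have main : ∀ m : ℕ, ∑ k ∈ Finset.range m, ‖T (g k)‖ ^ s ≤ A ^ s * C₀ ^ s := by
    intro m
    have weak : ∀ φ : FockSpace n p α →L[ℂ] ℂ, ‖φ‖ ≤ 1 →
        (∑ k : Fin m, ‖φ (g (k:ℕ))‖ ^ s) ^ (1/s) ≤ A := by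
      intro φ hφ
      have H : ∀ a : Fin m → ℂ, ‖∑ j : Fin m, a j * φ (g (j:ℕ))‖
          ≤ A * (∑ j : Fin m, ‖a j‖ ^ p) ^ (1/p) := by
        intro a
        set x : FockSpace n p α := ∑ j : Fin m, a j • g (j:ℕ) with hx
        have hφx : φ x = ∑ j : Fin m, a j * φ (g (j:ℕ)) := by
          rw [hx, map_sum]
          exact Finset.sum_congr rfl fun j _ => by rw [_root_.map_smul, smul_eq_mul]
        have hxLp : ((x : Lp ℂ (ENNReal.ofReal p) (wMeasure n p α)))
            = ∑ j : Fin m, a j • ((g (j:ℕ) : Lp ℂ (ENNReal.ofReal p) (wMeasure n p α))) := by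
          rw [hx, AddSubmonoidClass.coe_finset_sum]
          exact Finset.sum_congr rfl fun j _ => rfl
        have hcoe : ((x : Lp ℂ (ENNReal.ofReal p) (wMeasure n p α)) : Cn n → ℂ)
            =ᵐ[wMeasure n p α]
            fun w => ∑ j : Fin m, a j * fockKernel n α (zs (j:ℕ)) w := by
          rw [hxLp]
          refine (Lp_coeFn_finset_sum Finset.univ
            (fun j : Fin m => a j • (g (j:ℕ) : Lp ℂ (ENNReal.ofReal p) (wMeasure n p α)))).trans ?_
          have hall : ∀ᵐ w ∂(wMeasure n p α), ∀ j : Fin m,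
              ((a j • (g (j:ℕ) : Lp ℂ (ENNReal.ofReal p) (wMeasure n p α)) :
                Lp ℂ (ENNReal.ofReal p) (wMeasure n p α)) : Cn n → ℂ) w
                = a j * fockKernel n α (zs (j:ℕ)) w := by
            rw [MeasureTheory.ae_all_iff]
            intro j
            filter_upwards [Lp.coeFn_smul (a j)
              (g (j:ℕ) : Lp ℂ (ENNReal.ofReal p) (wMeasure n p α)), hg (j:ℕ)] with w h1 h2
            rw [h1, Pi.smul_apply, h2, smul_eq_mul]
          filter_upwards [hall] with w hw
          exact Finset.sum_congr rfl fun j _ => hw j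
        have hnx : ‖x‖ ≤ A0 * (∑ j : Fin m, ‖a j‖ ^ p) ^ (1/p) := by
          have hcb := combo_norm_bound hα hp1 hM0 hM hJtop hJ m a _ hcoe
          calc ‖x‖ = ‖(x : Lp ℂ (ENNReal.ofReal p) (wMeasure n p α))‖ := rfl
            _ ≤ A0 * (∑ j : Fin m, ‖a j‖ ^ p) ^ (1/p) := hcb
        have hSnn : (0:ℝ) ≤ (∑ j : Fin m, ‖a j‖ ^ p) ^ (1/p) :=
          Real.rpow_nonneg (Finset.sum_nonneg fun j _ =>
            Real.rpow_nonneg (norm_nonneg _) p) _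
        calc ‖∑ j : Fin m, a j * φ (g (j:ℕ))‖ = ‖φ x‖ := by rw [hφx]
          _ ≤ ‖φ‖ * ‖x‖ := φ.le_opNorm x
          _ ≤ 1 * (A0 * (∑ j : Fin m, ‖a j‖ ^ p) ^ (1/p)) :=
              mul_le_mul hφ hnx (norm_nonneg x) zero_le_one
          _ ≤ A * (∑ j : Fin m, ‖a j‖ ^ p) ^ (1/p) := by
              rw [one_mul]
              exact mul_le_mul_of_nonneg_right (le_max_left _ _) hSnn
      have hdual := dual_finite (fun k : Fin m => φ (g (k:ℕ))) hp1 hA1.le hs H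
      calc (∑ k : Fin m, ‖φ (g (k:ℕ))‖ ^ s) ^ (1/s)
          ≤ (A ^ s) ^ (1/s) := Real.rpow_le_rpow (Finset.sum_nonneg fun k _ =>
            Real.rpow_nonneg (norm_nonneg _) s) hdual (by positivity)
        _ = A := by
            rw [← Real.rpow_mul hA1.le, mul_one_div, div_self hs0.ne', Real.rpow_one]
    have hsm := hsumm m (fun k : Fin m => g (k:ℕ)) A weak
    have hXnn : 0 ≤ ∑ k : Fin m, ‖T (g (k:ℕ))‖ ^ s :=
      Finset.sum_nonneg fun k _ => Real.rpow_nonneg (norm_nonneg _) s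
    have h2 : ∑ k : Fin m, ‖T (g (k:ℕ))‖ ^ s ≤ (C₀ * A) ^ s := by
      have h3 := Real.rpow_le_rpow (Real.rpow_nonneg hXnn _) hsm hs0.le
      rwa [← Real.rpow_mul hXnn, one_div_mul_cancel hs0.ne', Real.rpow_one] at h3
    rw [← Fin.sum_univ_eq_sum_range (fun k => ‖T (g k)‖ ^ s) m]
    refine h2.trans ?_
    rw [Real.mul_rpow hC₀ hA1.le]
    exact le_of_eq (mul_comm _ _)
  refine Summable.tsum_le_of_sum_le ENNReal.summable ?_
  intro F
  set m := (F.sup id) + 1 with hm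
  have hsub : F ⊆ Finset.range m := fun j hj =>
    Finset.mem_range.mpr (Nat.lt_succ_of_le (Finset.le_sup (f := id) hj))
  calc ∑ j ∈ F, ENNReal.ofReal (‖T (g j)‖ ^ s)
      ≤ ∑ j ∈ Finset.range m, ENNReal.ofReal (‖T (g j)‖ ^ s) :=
        Finset.sum_le_sum_of_subset hsub
    _ = ENNReal.ofReal (∑ j ∈ Finset.range m, ‖T (g j)‖ ^ s) :=
        (ENNReal.ofReal_sum_of_nonneg fun j _ => Real.rpow_nonneg (norm_nonneg _) s).symm
    _ ≤ ENNReal.ofReal (A ^ s * C₀ ^ s) := ENNReal.ofReal_le_ofReal (main m)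
end
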